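/- arXiv:1405.0096 — 3 statements merged into one kernel-verified Lean document; each statement's English description precedes it below -/
import Mathlib

section
/- Let H_1 be an r_1-regular graph with r_1 ≥ 1, let α, β be the two roots of x² − r_1 x − (m−1) = 0, and let G = G[F,V_k,H_v] with |V_k| = k. Then every λ ∈ σ(A(H_v)) other than α and β is an eigenvalue of A(G) with multiplicity at least k. Moreover, for every x ≠ r_1, f_{A(G)}(x) = (x − r_1)^k · ∏_{j=1}^{m−2} (x − λ_j(H_1))^k · det( x I_n − A(F) − ((m−1)/(x − r_1)) · diag(I_k, 0) ), so that the remaining n + k eigenvalues of A(G) depend only on F, V_k, m and r_1 and not otherwise on H_v. -/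
open Matrix BigOperators
open scoped Classical

/-- The adjacency matrix of a simple graph, with entries in `R`. -/
noncomputable def adjMat (R : Type*) [Zero R] [One R] {V : Type*} [Fintype V]
    (G : SimpleGraph V) : Matrix V V R :=
  Matrix.of fun x y => if G.Adj x y then (1 : R) else 0

/-- The degree of a vertex. -/
noncomputable def gdeg {V : Type*} [Fintype V] (G : SimpleGraph V) (x : V) : ℕ :=
  (Finset.univ.filter fun y => G.Adj x y).card

/-- `G` is `r`-regular. -/
def IsReg {V : Type*} [Fintype V] (G : SimpleGraph V) (r : ℕ) : Prop :=
  ∀ x, gdeg G x = r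

/-- The signless Laplacian matrix `Q(G) = D(G) + A(G)`. -/
noncomputable def qMat (R : Type*) [AddMonoidWithOne R] {V : Type*} [Fintype V]
    (G : SimpleGraph V) : Matrix V V R :=
  Matrix.diagonal (fun x => (gdeg G x : R)) + adjMat R G

/-- The adjacency spectrum, as the multiset of real roots (with multiplicity) of the
characteristic polynomial of the (real symmetric) adjacency matrix. -/
noncomputable def aSpec {V : Type*} [Fintype V] (G : SimpleGraph V) : Multiset ℝ :=
  (adjMat ℝ G).charpoly.roots

/-- The signless Laplacian spectrum. -/
noncomputable def qSpec {V : Type*} [Fintype V] (G : SimpleGraph V) : Multiset ℝ :=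
  (qMat ℝ G).charpoly.roots

/-- The `M`-coronal `Γ_M(x) = 1ᵀ (xI − M)⁻¹ 1`, the sum of the entries of `(xI − M)⁻¹`. -/
noncomputable def coronal {n R : Type*} [Fintype n] [DecidableEq n] [Field R]
    (M : Matrix n n R) (x : R) : R :=
  ∑ i, ∑ j, ((x • (1 : Matrix n n R) - M)⁻¹) i j

/-- Embeds a `P × P` matrix as a `V × V` matrix supported on the image of `g`, zero elsewhere.
If the vertices of `V` are ordered listing the image of `g` first, this is `diag(M, 0)`. -/
noncomputable def embedMatrix {P V R : Type*} [Fintype P] [AddCommMonoid R]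
    (g : P → V) (M : Matrix P P R) : Matrix V V R :=
  Matrix.of fun x y => ∑ px : P, ∑ py : P, if x = g px ∧ y = g py then M px py else 0

/-- The graph `H − v` obtained by deleting the vertex `v`. -/
def delVert {W : Type*} (H : SimpleGraph W) (v : W) : SimpleGraph {w : W // w ≠ v} :=
  H.comap Subtype.val

/-- The graph `H − {u,v}` obtained by deleting the two vertices `u, v`. -/
def delVert2 {W : Type*} (H : SimpleGraph W) (u v : W) :
    SimpleGraph {w : W // w ≠ u ∧ w ≠ v} :=
  H.comap Subtype.val

/-- The join `G₁ ∨ G₂` of two vertex-disjoint graphs: their disjoint union together with all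
edges between the two parts. -/
def sgJoin {α β : Type*} (G₁ : SimpleGraph α) (G₂ : SimpleGraph β) : SimpleGraph (α ⊕ β) where
  Adj x y :=
    match x, y with
    | Sum.inl a, Sum.inl b => G₁.Adj a b
    | Sum.inl _, Sum.inr _ => True
    | Sum.inr _, Sum.inl _ => True
    | Sum.inr a, Sum.inr b => G₂.Adj a b
  symm := by
    constructor
    rintro (a | a) (b | b) h
    · exact G₁.adj_symm h
    · trivial
    · trivial
    · exact G₂.adj_symm h
  loopless := by
    constructor
    rintro (a | a) h
    · exact G₁.irrefl h
    · exact G₂.irrefl h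

/-- The graph `G[F, V_k, H_v]` with `k` pockets: take one copy of `F` and `k` disjoint copies
of `H` (with specified vertex `v`), identifying the vertex `v` of the `i`-th copy with the
vertex `f i` of `F`.  The `i`-th copy of `H − v` is carried by `{i} × {w // w ≠ v}`. -/
def pocketGraph {V W : Type*} (F : SimpleGraph V) (H : SimpleGraph W) (v : W)
    {k : ℕ} (f : Fin k ↪ V) : SimpleGraph (V ⊕ (Fin k × {w : W // w ≠ v})) where
  Adj x y :=
    match x, y with
    | Sum.inl a, Sum.inl b => F.Adj a b
    | Sum.inl a, Sum.inr (i, w) => a = f i ∧ H.Adj v w.1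
    | Sum.inr (i, w), Sum.inl a => a = f i ∧ H.Adj v w.1
    | Sum.inr (i, w), Sum.inr (j, w') => i = j ∧ H.Adj w.1 w'.1
  symm := by
    constructor
    rintro (a | ⟨i, w⟩) (b | ⟨j, w'⟩) h
    · exact F.adj_symm h
    · exact h
    · exact h
    · exact ⟨h.1.symm, H.adj_symm h.2⟩
  loopless := by
    constructor
    rintro (a | ⟨i, w⟩) h
    · exact F.irrefl h
    · exact H.irrefl h.2

/-- The graph `G[F, E_k, H_{uv}]` with `k` edge-pockets: take one copy of `F` and `k` disjoint
copies of `H` (with specified edge `uv`), pasting the edge `uv` of the `i`-th copy onto the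
edge `e_i = (a i)(b i)` of `F` (identifying `u` with `a i` and `v` with `b i`).  The `i`-th
copy of `H − {u,v}` is carried by `{i} × {w // w ≠ u ∧ w ≠ v}`. -/
def edgePocketGraph {V W : Type*} (F : SimpleGraph V) (H : SimpleGraph W) (u v : W)
    {k : ℕ} (a b : Fin k → V) :
    SimpleGraph (V ⊕ (Fin k × {w : W // w ≠ u ∧ w ≠ v})) where
  Adj x y :=
    match x, y with
    | Sum.inl s, Sum.inl t => F.Adj s t
    | Sum.inl s, Sum.inr (i, w) => (s = a i ∧ H.Adj u w.1) ∨ (s = b i ∧ H.Adj v w.1)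
    | Sum.inr (i, w), Sum.inl s => (s = a i ∧ H.Adj u w.1) ∨ (s = b i ∧ H.Adj v w.1)
    | Sum.inr (i, w), Sum.inr (j, w') => i = j ∧ H.Adj w.1 w'.1
  symm := by
    constructor
    rintro (s | ⟨i, w⟩) (t | ⟨j, w'⟩) h
    · exact F.adj_symm h
    · exact h
    · exact h
    · exact ⟨h.1.symm, H.adj_symm h.2⟩
  loopless := by
    constructor
    rintro (s | ⟨i, w⟩) h
    · exact F.irrefl h
    · exact H.irrefl h.2

section AuxiliaryLemmas

open Polynomial

variable {ι : Type*} [Fintype ι] [DecidableEq ι]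


variable {ι : Type*} [Fintype ι] [DecidableEq ι]

lemma eval_charpoly' (M : Matrix ι ι ℝ) (x : ℝ) :
    M.charpoly.eval x = (x • (1 : Matrix ι ι ℝ) - M).det := by
  rw [Matrix.charpoly, ← Polynomial.coe_evalRingHom, RingHom.map_det]
  congr 1
  ext i j
  by_cases h : i = j <;>
    simp [Matrix.charmatrix_apply_eq, Matrix.charmatrix_apply_ne, h, Matrix.one_apply]

lemma adj_isHerm {V : Type*} [Fintype V] (G : SimpleGraph V) :
    (adjMat ℝ G).IsHermitian := by
  ext i j
  simp [adjMat, Matrix.conjTranspose_apply, SimpleGraph.adj_comm]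

lemma herm_charpoly_eq_prod (M : Matrix ι ι ℝ) (hM : M.IsHermitian) :
    M.charpoly = ∏ i, (X - C (hM.eigenvalues i)) := by
  apply Polynomial.funext
  intro x
  rw [eval_charpoly']
  have hU := Matrix.mem_unitaryGroup_iff.mp hM.eigenvectorUnitary.2
  have h1 : x • (1 : Matrix ι ι ℝ) - M =
      (hM.eigenvectorUnitary : Matrix ι ι ℝ) *
        (x • 1 - Matrix.diagonal (RCLike.ofReal ∘ hM.eigenvalues)) *
        (star (hM.eigenvectorUnitary : Matrix ι ι ℝ)) := by
    rw [Matrix.mul_sub, Matrix.sub_mul]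
    conv_lhs => rw [hM.spectral_theorem]
    congr 1
    rw [Matrix.mul_smul, Matrix.mul_one, Matrix.smul_mul, hU]
  have hU' : star (hM.eigenvectorUnitary : Matrix ι ι ℝ) * (hM.eigenvectorUnitary : Matrix ι ι ℝ) = 1 :=
    Matrix.mem_unitaryGroup_iff'.mp hM.eigenvectorUnitary.2
  rw [h1, Matrix.det_mul, Matrix.det_mul, mul_comm, ← mul_assoc, ← Matrix.det_mul, hU']
  have h2 : x • (1 : Matrix ι ι ℝ) - Matrix.diagonal (RCLike.ofReal ∘ hM.eigenvalues) =
      Matrix.diagonal (fun i => x - hM.eigenvalues i) := by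
    ext i j
    rcases eq_or_ne i j with h | h
    · subst h; simp [Matrix.one_apply, Matrix.diagonal_apply]
    · simp [Matrix.diagonal_apply_ne _ h, Matrix.one_apply_ne h]
  rw [Matrix.det_one, one_mul, h2, Matrix.det_diagonal]
  simp [Polynomial.eval_prod]

lemma herm_charpoly_prod_roots (M : Matrix ι ι ℝ) (hM : M.IsHermitian) :
    M.charpoly = (M.charpoly.roots.map fun μ => X - C μ).prod := by
  refine Polynomial.Splits.eq_prod_roots_of_monic ?_ (Matrix.charpoly_monic M)
  rw [herm_charpoly_eq_prod M hM]
  exact Polynomial.Splits.prod fun i _ => Polynomial.Splits.X_sub_C _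

lemma sum_sum_inv (S : Matrix ι ι ℝ) (hS : IsUnit S.det) (c : ℝ)
    (hrow : ∀ i, ∑ j, S i j = c) (hc : c ≠ 0) :
    ∑ i, ∑ j, S⁻¹ i j = (Fintype.card ι : ℝ) / c := by
  have h1 : S *ᵥ (fun _ => (1:ℝ)) = fun _ => c := by
    ext i
    simpa [Matrix.mulVec, dotProduct] using hrow i
  have h2 : S⁻¹ *ᵥ (fun _ => (1:ℝ)) = fun _ => 1/c := by
    have h3 := congrArg (fun w => S⁻¹ *ᵥ w) h1
    simp only [Matrix.mulVec_mulVec, Matrix.nonsing_inv_mul _ hS, Matrix.one_mulVec] at h3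
    have h4 : (fun _ : ι => c) = c • (fun _ : ι => (1:ℝ)) := by
      funext i; simp
    rw [h4, Matrix.mulVec_smul] at h3
    have h5 : (c⁻¹ • fun _ : ι => (1:ℝ)) = c⁻¹ • (c • (S⁻¹ *ᵥ fun _ => (1:ℝ))) := by
      rw [← h3]
    rw [smul_smul, inv_mul_cancel₀ hc, one_smul] at h5
    rw [← h5]
    funext i
    simp [one_div]
  calc ∑ i, ∑ j, S⁻¹ i j = ∑ i, (S⁻¹ *ᵥ fun _ => (1:ℝ)) i := by
        simp [Matrix.mulVec, dotProduct]
    _ = ∑ _i : ι, 1/c := by rw [h2]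
    _ = (Fintype.card ι : ℝ) / c := by
        simp [Finset.sum_const, Finset.card_univ, div_eq_mul_inv, mul_comm]

lemma rowsum_reg (H₁ : SimpleGraph ι) (r : ℕ) (hreg : IsReg H₁ r) (x : ℝ) (i : ι) :
    ∑ j, (x • (1 : Matrix ι ι ℝ) - adjMat ℝ H₁) i j = x - r := by
  have h1 : ∑ j, (if H₁.Adj i j then (1:ℝ) else 0) = (r : ℝ) := by
    rw [Finset.sum_boole]
    norm_cast
    exact hreg i
  simp only [Matrix.sub_apply, Matrix.smul_apply, Matrix.one_apply, smul_eq_mul,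
    Finset.sum_sub_distrib, adjMat, Matrix.of_apply]
  rw [h1]
  congr 1
  simp [Finset.sum_ite_eq]

lemma det_at_reg [Nonempty ι] (H₁ : SimpleGraph ι) (r : ℕ) (hreg : IsReg H₁ r) :
    ((r : ℝ) • (1 : Matrix ι ι ℝ) - adjMat ℝ H₁).det = 0 := by
  rw [← Matrix.exists_mulVec_eq_zero_iff]
  refine ⟨fun _ => 1, ?_, ?_⟩
  · intro h
    have := congrFun h (Classical.arbitrary ι)
    simp at this
  · ext i
    simpa [Matrix.mulVec, dotProduct] using rowsum_reg H₁ r hreg (r : ℝ) i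

section Key

lemma aSpec_eq {U : Type*} [Fintype U] [DecidableEq U] (G : SimpleGraph U) :
    aSpec G = (adjMat ℝ G).charpoly.roots := by
  unfold aSpec
  congr!


variable {V W : Type*} [Fintype V] [DecidableEq V] [Fintype W] [DecidableEq W]







lemma key_real
    (m r₁ : ℕ) (hm : Fintype.card W = m) (hm2 : 2 ≤ m)
    (F : SimpleGraph V) (H : SimpleGraph W) (v : W)
    (hdeg : ∀ w : W, w ≠ v → H.Adj v w)
    (hreg : IsReg (delVert H v) r₁)
    {k : ℕ} (f : Fin k ↪ V) (x : ℝ)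
    (hx : IsUnit (x • (1 : Matrix {w : W // w ≠ v} {w : W // w ≠ v} ℝ)
        - adjMat ℝ (delVert H v)).det) :
    x ≠ (r₁ : ℝ) ∧
    (x • (1 : Matrix (V ⊕ (Fin k × {w : W // w ≠ v})) (V ⊕ (Fin k × {w : W // w ≠ v})) ℝ)
        - adjMat ℝ (pocketGraph F H v f)).det
      = (x • (1 : Matrix {w : W // w ≠ v} {w : W // w ≠ v} ℝ) - adjMat ℝ (delVert H v)).det ^ k
        * (x • (1 : Matrix V V ℝ) - adjMat ℝ F
            - (((m : ℝ) - 1) / (x - (r₁ : ℝ)))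
                • embedMatrix (⇑f) (1 : Matrix (Fin k) (Fin k) ℝ)).det := by
  set W' := {w : W // w ≠ v} with hW'
  have hcardW' : Fintype.card W' = m - 1 := by
    have h1 : Fintype.card {w : W // w = v} = 1 := Fintype.card_subtype_eq v
    have := Fintype.card_subtype_compl (fun w : W => w = v)
    simp only [h1, hm] at this
    exact this
  have hne : Nonempty W' := by
    rw [← Fintype.card_pos_iff, hcardW']
    omega
  set S : Matrix W' W' ℝ := x • 1 - adjMat ℝ (delVert H v) with hS
  have hxr : x ≠ (r₁ : ℝ) := by
    intro h
    rw [hS, h] at hx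
    rw [det_at_reg _ r₁ hreg] at hx
    exact (not_isUnit_zero : ¬ IsUnit (0:ℝ)) hx
  refine ⟨hxr, ?_⟩
  set B : Matrix V (Fin k × W') ℝ := Matrix.of fun a p => if a = f p.1 then 1 else 0 with hB
  set DD : Matrix (Fin k × W') (Fin k × W') ℝ :=
    Matrix.of fun p q => if p.1 = q.1 then S p.2 q.2 else 0 with hDD
  have hblock : x • (1 : Matrix (V ⊕ (Fin k × W')) (V ⊕ (Fin k × W')) ℝ)
      - adjMat ℝ (pocketGraph F H v f)
      = Matrix.fromBlocks (x • 1 - adjMat ℝ F) (-B) (-Bᵀ) DD := by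
    ext i j
    rcases i with a | ⟨i, w⟩ <;> rcases j with b | ⟨j, w'⟩
    · simp [adjMat, Matrix.one_apply, pocketGraph]; congr
    · have h1 : (pocketGraph F H v f).Adj (Sum.inl a) (Sum.inr (j, w')) ↔ a = f j :=
        and_iff_left (hdeg _ w'.2)
      simp only [Matrix.sub_apply, Matrix.smul_apply, Matrix.one_apply, Matrix.fromBlocks_apply₁₂,
        adjMat, Matrix.of_apply, Matrix.neg_apply, hB]
      rw [if_neg (by simp), if_congr h1 rfl rfl]
      simp
    · have h1 : (pocketGraph F H v f).Adj (Sum.inr (i, w)) (Sum.inl b) ↔ b = f i :=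
        and_iff_left (hdeg _ w.2)
      simp only [Matrix.sub_apply, Matrix.smul_apply, Matrix.one_apply, Matrix.fromBlocks_apply₂₁,
        adjMat, Matrix.of_apply, Matrix.neg_apply, Matrix.transpose_apply, hB]
      rw [if_neg (by simp), if_congr h1 rfl rfl]
      simp
    · show x * (if _ then _ else _) - _ = DD _ _
      by_cases h : i = j
      · subst h
        simp only [hDD, Matrix.of_apply, if_pos rfl, hS, Matrix.sub_apply, Matrix.smul_apply,
          Matrix.one_apply, smul_eq_mul, adjMat, pocketGraph]
        by_cases h2 : w = w'
        · subst h2; simp [delVert]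
        · simp only [Sum.inr.injEq, Prod.mk.injEq, true_and, h2, if_false, if_neg h2]
          simp [delVert, SimpleGraph.comap, h2]; congr
      · simp only [hDD, Matrix.of_apply, if_neg h, Matrix.sub_apply, Matrix.smul_apply,
          Matrix.one_apply, smul_eq_mul, adjMat, pocketGraph]
        simp [h]
  have hDDsub : DD = (Matrix.blockDiagonal fun _ : Fin k => S).submatrix
      (Equiv.prodComm (Fin k) W') (Equiv.prodComm (Fin k) W') := by
    ext p q
    rcases p with ⟨i, w⟩
    rcases q with ⟨j, w'⟩
    simp [Matrix.blockDiagonal_apply, hDD]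
  have hdetDD : DD.det = S.det ^ k := by
    rw [hDDsub, Matrix.det_submatrix_equiv_self, Matrix.det_blockDiagonal]
    simp
  haveI : Invertible DD := Matrix.invertibleOfIsUnitDet DD (by rw [hdetDD]; exact hx.pow k)
  rw [hblock, Matrix.det_fromBlocks₂₂, hdetDD]
  congr 1
  rw [invOf_eq_nonsing_inv]
  set Dinv : Matrix (Fin k × W') (Fin k × W') ℝ :=
    Matrix.of fun p q => if p.1 = q.1 then S⁻¹ p.2 q.2 else 0 with hDinv
  have hSS : S * S⁻¹ = 1 := Matrix.mul_nonsing_inv _ hx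
  have hinv : DD⁻¹ = Dinv := by
    apply Matrix.inv_eq_right_inv
    ext p q
    rcases p with ⟨i, w⟩
    rcases q with ⟨j, w'⟩
    rw [Matrix.mul_apply, Fintype.sum_prod_type]
    have hterm : ∀ l : Fin k, ∑ u : W', DD (i,w) (l,u) * Dinv (l,u) (j,w')
        = if l = i then (if i = j then ∑ u : W', S w u * S⁻¹ u w' else 0) else 0 := by
      intro l
      rcases eq_or_ne l i with h | h
      · subst h
        simp only [hDD, hDinv, Matrix.of_apply, if_pos rfl]
        rcases eq_or_ne l j with h2 | h2
        · subst h2; simp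
        · simp [h2]
      · simp [hDD, hDinv, Ne.symm h, h]
    rw [Finset.sum_congr rfl fun l _ => hterm l, Finset.sum_ite_eq' Finset.univ i
      (fun _ => if i = j then ∑ u : W', S w u * S⁻¹ u w' else 0)]
    simp only [Finset.mem_univ, if_true]
    rcases eq_or_ne i j with h | h
    · subst h
      rw [if_pos rfl, ← Matrix.mul_apply, hSS]
      simp [Matrix.one_apply, Prod.ext_iff]
    · simp [h, Matrix.one_apply, Prod.ext_iff]
  have hsum : ∑ w : W', ∑ w' : W', S⁻¹ w w' = ((m:ℝ) - 1) / (x - (r₁:ℝ)) := by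
    have h1 := sum_sum_inv S hx (x - (r₁:ℝ)) (fun i => rowsum_reg _ r₁ hreg x i)
      (sub_ne_zero_of_ne hxr)
    rw [hcardW'] at h1
    rw [h1]
    congr 1
    have h2 : (1:ℕ) ≤ m := by omega
    push_cast [Nat.cast_sub h2]
    ring
  have hBDB : B * Dinv * Bᵀ
      = (((m:ℝ)-1)/(x - (r₁:ℝ))) • embedMatrix (⇑f) (1 : Matrix (Fin k) (Fin k) ℝ) := by
    ext a b
    have h1 : ∀ q : Fin k × W', (B * Dinv) a q
        = if a = f q.1 then (∑ w : W', S⁻¹ w q.2) else 0 := by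
      intro q
      rw [Matrix.mul_apply, Fintype.sum_prod_type]
      have hterm : ∀ i : Fin k, ∑ w : W', B a (i, w) * Dinv (i, w) q
          = if i = q.1 then (if a = f i then ∑ w : W', S⁻¹ w q.2 else 0) else 0 := by
        intro i
        rcases eq_or_ne i q.1 with h | h
        · rcases eq_or_ne a (f i) with h2 | h2 <;> simp [hB, hDinv, h, h2]
        · simp [hB, hDinv, h]
      rw [Finset.sum_congr rfl fun i _ => hterm i, Finset.sum_ite_eq' Finset.univ q.1
        (fun i => if a = f i then ∑ w : W', S⁻¹ w q.2 else 0)]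
      simp
    have h2 : (B * Dinv * Bᵀ) a b
        = ∑ j : Fin k, (if a = f j ∧ b = f j then (1:ℝ) else 0)
            * (((m:ℝ) - 1) / (x - (r₁:ℝ))) := by
      rw [Matrix.mul_apply, Fintype.sum_prod_type]
      refine Finset.sum_congr rfl fun j _ => ?_
      have hterm : ∀ w' : W', (B * Dinv) a (j, w') * Bᵀ (j, w') b
          = (if a = f j ∧ b = f j then (1:ℝ) else 0) * ∑ w : W', S⁻¹ w w' := by
        intro w'
        rw [h1]
        simp only [Matrix.transpose_apply, hB, Matrix.of_apply]
        rcases eq_or_ne a (f j) with ha | ha <;> rcases eq_or_ne b (f j) with hb | hb <;>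
          simp [ha, hb]
      rw [Finset.sum_congr rfl fun w' _ => hterm w', ← Finset.mul_sum,
        show (∑ w' : W', ∑ w : W', S⁻¹ w w') = ∑ w : W', ∑ w' : W', S⁻¹ w w' from
          Finset.sum_comm, hsum]
    have hE : embedMatrix (⇑f) (1 : Matrix (Fin k) (Fin k) ℝ) a b
        = ∑ j : Fin k, if a = f j ∧ b = f j then (1:ℝ) else 0 := by
      simp only [embedMatrix, Matrix.of_apply]
      refine Finset.sum_congr rfl fun px _ => ?_
      rw [Finset.sum_eq_single px]
      · simp [Matrix.one_apply]
      · intro py _ hpy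
        simp [Matrix.one_apply_ne (Ne.symm hpy)]
      · simp
    rw [h2, Matrix.smul_apply, hE, smul_eq_mul, Finset.mul_sum]
    exact Finset.sum_congr rfl fun j _ => mul_comm _ _
  rw [hinv, Matrix.neg_mul, Matrix.neg_mul, Matrix.mul_neg, neg_neg, hBDB]

lemma key_real2
    (m r₁ : ℕ) (hm : Fintype.card W = m) (hm2 : 2 ≤ m)
    (H : SimpleGraph W) (v : W)
    (hdeg : ∀ w : W, w ≠ v → H.Adj v w)
    (hreg : IsReg (delVert H v) r₁) (x : ℝ)
    (hx : IsUnit (x • (1 : Matrix {w : W // w ≠ v} {w : W // w ≠ v} ℝ)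
        - adjMat ℝ (delVert H v)).det) :
    x ≠ (r₁ : ℝ) ∧
    (x • (1 : Matrix W W ℝ) - adjMat ℝ H).det
      = (x • (1 : Matrix {w : W // w ≠ v} {w : W // w ≠ v} ℝ) - adjMat ℝ (delVert H v)).det
        * (x - ((m:ℝ) - 1) / (x - (r₁:ℝ))) := by
  set W' := {w : W // w ≠ v} with hW'
  have hcardW' : Fintype.card W' = m - 1 := by
    have h1 : Fintype.card {w : W // w = v} = 1 := Fintype.card_subtype_eq v
    have := Fintype.card_subtype_compl (fun w : W => w = v)
    simp only [h1, hm] at this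
    exact this
  have hne : Nonempty W' := by
    rw [← Fintype.card_pos_iff, hcardW']
    omega
  set S : Matrix W' W' ℝ := x • 1 - adjMat ℝ (delVert H v) with hS
  have hxr : x ≠ (r₁ : ℝ) := by
    intro h
    rw [hS, h] at hx
    rw [det_at_reg _ r₁ hreg] at hx
    exact (not_isUnit_zero : ¬ IsUnit (0:ℝ)) hx
  refine ⟨hxr, ?_⟩
  haveI : Unique {w : W // w = v} := ⟨⟨⟨v, rfl⟩⟩, fun u => Subtype.ext u.2⟩
  set e : {w : W // w = v} ⊕ {w : W // ¬ w = v} ≃ W := Equiv.sumCompl (fun w : W => w = v)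
    with he
  set A2 : Matrix {w : W // w = v} {w : W // w = v} ℝ := Matrix.of fun _ _ => x with hA2
  set B2 : Matrix {w : W // w = v} W' ℝ := Matrix.of fun _ _ => (-1 : ℝ) with hB2
  set C2 : Matrix W' {w : W // w = v} ℝ := Matrix.of fun _ _ => (-1 : ℝ) with hC2
  have hblock : (x • (1 : Matrix W W ℝ) - adjMat ℝ H).submatrix e e
      = Matrix.fromBlocks A2 B2 C2 S := by
    ext i j
    rcases i with u | w <;> rcases j with u' | w'
    · have h1 : (u : W) = v := u.2
      have h2 : (u' : W) = v := u'.2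
      simp [Matrix.submatrix_apply, he, Matrix.one_apply, adjMat, h1, h2, hA2]
    · have h1 : (u : W) = v := u.2
      have h2 : ((w' : W') : W) ≠ v := w'.2
      simp only [Matrix.submatrix_apply, he, Equiv.sumCompl_apply_inl,
        Equiv.sumCompl_apply_inr, Matrix.sub_apply, Matrix.smul_apply, Matrix.one_apply,
        smul_eq_mul, adjMat, Matrix.of_apply, Matrix.fromBlocks_apply₁₂, hB2]
      rw [if_neg (by rw [h1]; exact Ne.symm h2), if_pos (by rw [h1]; exact hdeg _ h2)]
      ring
    · have h1 : (u' : W) = v := u'.2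
      have h2 : ((w : W') : W) ≠ v := w.2
      simp only [Matrix.submatrix_apply, he, Equiv.sumCompl_apply_inl,
        Equiv.sumCompl_apply_inr, Matrix.sub_apply, Matrix.smul_apply, Matrix.one_apply,
        smul_eq_mul, adjMat, Matrix.of_apply, Matrix.fromBlocks_apply₂₁, hC2]
      rw [if_neg (by rw [h1]; exact h2), if_pos (by rw [h1]; exact (hdeg _ h2).symm)]
      ring
    · simp only [Matrix.submatrix_apply, he, Equiv.sumCompl_apply_inr, Matrix.sub_apply,
        Matrix.smul_apply, Matrix.one_apply, smul_eq_mul, adjMat, Matrix.of_apply,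
        Matrix.fromBlocks_apply₂₂, hS, delVert]
      rcases eq_or_ne w w' with h | h
      · subst h; simp
      · simp [h, Subtype.coe_inj]
  haveI : Invertible S := Matrix.invertibleOfIsUnitDet S hx
  rw [← Matrix.det_submatrix_equiv_self e, hblock, Matrix.det_fromBlocks₂₂]
  congr 1
  rw [Matrix.det_unique, invOf_eq_nonsing_inv]
  have hsum : ∑ w : W', ∑ w' : W', S⁻¹ w w' = ((m:ℝ) - 1) / (x - (r₁:ℝ)) := by
    have h1 := sum_sum_inv S hx (x - (r₁:ℝ)) (fun i => rowsum_reg _ r₁ hreg x i)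
      (sub_ne_zero_of_ne hxr)
    rw [hcardW'] at h1
    rw [h1]
    congr 1
    have h2 : (1:ℕ) ≤ m := by omega
    push_cast [Nat.cast_sub h2]
    ring
  have hBC : (B2 * S⁻¹ * C2) default default = ((m:ℝ) - 1) / (x - (r₁:ℝ)) := by
    rw [Matrix.mul_apply]
    have h1 : ∀ w' : W', (B2 * S⁻¹) default w' * C2 w' default = ∑ w : W', S⁻¹ w w' := by
      intro w'
      rw [Matrix.mul_apply]
      simp [hB2, hC2, Finset.sum_neg_distrib]
    rw [Finset.sum_congr rfl fun w' _ => h1 w',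
      show (∑ w' : W', ∑ w : W', S⁻¹ w w') = ∑ w : W', ∑ w' : W', S⁻¹ w w' from
        Finset.sum_comm, hsum]
  rw [Matrix.sub_apply, hBC]
  simp [hA2]



noncomputable def NP {V : Type*} [Fintype V] [DecidableEq V] (AF E : Matrix V V ℝ) (r c : ℝ) :
    Matrix V V ℝ[X] :=
  Matrix.of fun a b => (X - C r) * (Matrix.charmatrix AF a b) - C (c * E a b)

lemma NP_det_eval {U : Type*} [Fintype U] [DecidableEq U] (AF E : Matrix U U ℝ) (r c x : ℝ) :
    (NP AF E r c).det.eval x = ((x - r) • (x • (1 : Matrix U U ℝ) - AF) - c • E).det := by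
  rw [← Polynomial.coe_evalRingHom, RingHom.map_det]
  congr 1
  ext a b
  by_cases h : a = b
  · subst h
    simp [NP, Matrix.charmatrix_apply_eq, Matrix.one_apply]
  · simp [NP, Matrix.charmatrix_apply_ne _ _ _ h, Matrix.one_apply_ne h]

lemma NP_factor {U : Type*} [Fintype U] [DecidableEq U] (n kk : ℕ) (hn : Fintype.card U = n)
    (AF : Matrix U U ℝ) (f : Fin kk ↪ U) (r c : ℝ) :
    ∃ q : ℝ[X], (NP AF (embedMatrix (⇑f) (1 : Matrix (Fin kk) (Fin kk) ℝ)) r c).det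
      = (X - C r) ^ (n - kk) * q := by
  classical
  set E := embedMatrix (⇑f) (1 : Matrix (Fin kk) (Fin kk) ℝ) with hE
  set P : U → Prop := fun a => ∃ i, a = f i with hP
  set vv : U → ℝ[X] := fun a => if P a then 1 else (X - C r) with hvv
  set NN : Matrix U U ℝ[X] :=
    Matrix.of (fun a b => if P a then NP AF E r c a b else Matrix.charmatrix AF a b) with hNN
  have hfac : (NP AF E r c) = Matrix.of fun a b => vv a * NN a b := by
    ext a b
    by_cases h : P a
    · simp [hvv, hNN, h]
    · have hE0 : E a b = 0 := by
        rw [hE]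
        simp only [embedMatrix, Matrix.of_apply]
        refine Finset.sum_eq_zero fun px _ => Finset.sum_eq_zero fun py _ => ?_
        rw [if_neg]
        rintro ⟨h1, -⟩
        exact h ⟨px, h1⟩
      simp [hvv, hNN, h, NP, hE0]
  have hprod : (∏ a : U, vv a) = (X - C r) ^ (n - kk) := by
    rw [hvv]
    rw [Finset.prod_ite (fun _ => (1:ℝ[X])) (fun _ => X - C r)]
    rw [Finset.prod_const_one, Finset.prod_const, one_mul]
    congr 1
    have h1 : (Finset.univ.filter P).card = kk := by
      have h2 : Finset.univ.filter P = Finset.univ.image f := by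
        ext a
        simp [hP, eq_comm]
      rw [h2, Finset.card_image_of_injective _ f.injective, Finset.card_univ, Fintype.card_fin]
    have h3 := Finset.card_filter_add_card_filter_not (s := Finset.univ) (p := P)
    rw [h1, Finset.card_univ, hn] at h3
    omega
  refine ⟨NN.det, ?_⟩
  rw [hfac, Matrix.det_mul_column, hprod]

lemma pid
    (n m r₁ : ℕ) (hn : Fintype.card V = n) (hm : Fintype.card W = m) (hm2 : 2 ≤ m)
    (F : SimpleGraph V) (H : SimpleGraph W) (v : W)
    (hdeg : ∀ w : W, w ≠ v → H.Adj v w)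
    (hreg : IsReg (delVert H v) r₁)
    {k : ℕ} (f : Fin k ↪ V) :
    (X - C (r₁:ℝ)) ^ n * (adjMat ℝ (pocketGraph F H v f)).charpoly
      = (adjMat ℝ (delVert H v)).charpoly ^ k
        * (NP (adjMat ℝ F) (embedMatrix (⇑f) (1 : Matrix (Fin k) (Fin k) ℝ))
            (r₁:ℝ) ((m:ℝ) - 1)).det := by
  apply Polynomial.eq_of_infinite_eval_eq
  have hfin : Set.Finite {y : ℝ | ((adjMat ℝ (delVert H v)).charpoly).IsRoot y} :=
    Polynomial.finite_setOf_isRoot (Matrix.charpoly_monic _).ne_zero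
  refine Set.Infinite.mono ?_ hfin.infinite_compl
  intro y hy
  have hx : IsUnit ((y • (1 : Matrix {w : W // w ≠ v} {w : W // w ≠ v} ℝ)
      - adjMat ℝ (delVert H v)).det) := by
    rw [← eval_charpoly']
    exact isUnit_iff_ne_zero.mpr hy
  obtain ⟨hxr, hdet⟩ := key_real m r₁ hm hm2 F H v hdeg hreg f y hx
  simp only [Set.mem_setOf_eq, Polynomial.eval_mul, Polynomial.eval_pow, Polynomial.eval_sub,
    Polynomial.eval_X, Polynomial.eval_C]
  rw [eval_charpoly', eval_charpoly', NP_det_eval, hdet]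
  have hsm : ((y - (r₁:ℝ)) • (y • (1:Matrix V V ℝ) - adjMat ℝ F)
        - ((m:ℝ) - 1) • embedMatrix (⇑f) (1 : Matrix (Fin k) (Fin k) ℝ))
      = (y - (r₁:ℝ)) • (y • (1:Matrix V V ℝ) - adjMat ℝ F
          - (((m:ℝ) - 1)/(y - (r₁:ℝ))) • embedMatrix (⇑f) (1 : Matrix (Fin k) (Fin k) ℝ)) := by
    have hc : (y - (r₁:ℝ)) • ((((m:ℝ) - 1)/(y - (r₁:ℝ)))
          • embedMatrix (⇑f) (1 : Matrix (Fin k) (Fin k) ℝ))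
        = ((m:ℝ) - 1) • embedMatrix (⇑f) (1 : Matrix (Fin k) (Fin k) ℝ) := by
      rw [smul_smul, mul_div_cancel₀ _ (sub_ne_zero_of_ne hxr)]
    conv_rhs => rw [smul_sub, hc]
  rw [hsm, Matrix.det_smul, hn]
  ring

lemma pid2
    (m r₁ : ℕ) (hm : Fintype.card W = m) (hm2 : 2 ≤ m)
    (H : SimpleGraph W) (v : W)
    (hdeg : ∀ w : W, w ≠ v → H.Adj v w)
    (hreg : IsReg (delVert H v) r₁)
    (α β : ℝ)
    (hαβ : ∀ x : ℝ, x ^ 2 - (r₁ : ℝ) * x - ((m : ℝ) - 1) = (x - α) * (x - β)) :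
    (X - C (r₁:ℝ)) * (adjMat ℝ H).charpoly
      = (X - C α) * (X - C β) * (adjMat ℝ (delVert H v)).charpoly := by
  apply Polynomial.eq_of_infinite_eval_eq
  have hfin : Set.Finite {y : ℝ | ((adjMat ℝ (delVert H v)).charpoly).IsRoot y} :=
    Polynomial.finite_setOf_isRoot (Matrix.charpoly_monic _).ne_zero
  refine Set.Infinite.mono ?_ hfin.infinite_compl
  intro y hy
  have hx : IsUnit ((y • (1 : Matrix {w : W // w ≠ v} {w : W // w ≠ v} ℝ)
      - adjMat ℝ (delVert H v)).det) := by
    rw [← eval_charpoly']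
    exact isUnit_iff_ne_zero.mpr hy
  obtain ⟨hxr, hdet⟩ := key_real2 m r₁ hm hm2 H v hdeg hreg y hx
  simp only [Set.mem_setOf_eq, Polynomial.eval_mul, Polynomial.eval_sub,
    Polynomial.eval_X, Polynomial.eval_C]
  rw [eval_charpoly', eval_charpoly', hdet]
  have h1 : (y - (r₁:ℝ)) * (y - ((m:ℝ) - 1)/(y - (r₁:ℝ))) = (y - α) * (y - β) := by
    rw [mul_sub, mul_div_cancel₀ _ (sub_ne_zero_of_ne hxr), ← hαβ y]
    ring
  calc (y - (r₁:ℝ)) * ((y • (1 : Matrix {w : W // w ≠ v} {w : W // w ≠ v} ℝ)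
          - adjMat ℝ (delVert H v)).det * (y - ((m:ℝ) - 1)/(y - (r₁:ℝ))))
      = (y • (1 : Matrix {w : W // w ≠ v} {w : W // w ≠ v} ℝ)
          - adjMat ℝ (delVert H v)).det * ((y - (r₁:ℝ)) * (y - ((m:ℝ) - 1)/(y - (r₁:ℝ)))) := by
        ring
    _ = _ := by rw [h1]; ring

end Key

end AuxiliaryLemmas

open Polynomial in
/-- Theorem 3.2. -/
theorem adj_spec_pocketGraph
    {V W : Type*} [Fintype V] [DecidableEq V] [Fintype W] [DecidableEq W]
    (n m k r₁ : ℕ) (hn : Fintype.card V = n) (hm : Fintype.card W = m) (hm2 : 2 ≤ m)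
    (hr₁ : 1 ≤ r₁)
    (F : SimpleGraph V) (H : SimpleGraph W) (v : W)
    (hdeg : ∀ w : W, w ≠ v → H.Adj v w)
    (hreg : IsReg (delVert H v) r₁)
    (f : Fin k ↪ V)
    (α β : ℝ)
    (hαβ : ∀ x : ℝ, x ^ 2 - (r₁ : ℝ) * x - ((m : ℝ) - 1) = (x - α) * (x - β)) :
    (∀ lam : ℝ, lam ∈ aSpec H → lam ≠ α → lam ≠ β →
        k ≤ Multiset.count lam (aSpec (pocketGraph F H v f)))
    ∧ (∀ x : ℝ, x ≠ (r₁ : ℝ) →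
        (x • (1 : Matrix (V ⊕ (Fin k × {w : W // w ≠ v})) (V ⊕ (Fin k × {w : W // w ≠ v})) ℝ)
            - adjMat ℝ (pocketGraph F H v f)).det
          = (x - (r₁ : ℝ)) ^ k
            * ((((aSpec (delVert H v)).erase (r₁ : ℝ)).map fun μ => x - μ).prod) ^ k
            * (x • (1 : Matrix V V ℝ)
                - (adjMat ℝ F
                    + (((m : ℝ) - 1) / (x - (r₁ : ℝ)))
                        • embedMatrix (f : Fin k → V) (1 : Matrix (Fin k) (Fin k) ℝ))).det) := by
    classical
  have hcardW' : Fintype.card {w : W // w ≠ v} = m - 1 := by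
    have h1 : Fintype.card {w : W // w = v} = 1 := Fintype.card_subtype_eq v
    have := Fintype.card_subtype_compl (fun w : W => w = v)
    simp only [h1, hm] at this
    exact this
  have hne : Nonempty {w : W // w ≠ v} := by
    rw [← Fintype.card_pos_iff, hcardW']
    omega
  set p₁ := (adjMat ℝ (delVert H v)).charpoly with hp₁def
  set pG := (adjMat ℝ (pocketGraph F H v f)).charpoly with hpGdef
  set pH := (adjMat ℝ H).charpoly with hpHdef
  have hp₁0 : p₁ ≠ 0 := (Matrix.charpoly_monic _).ne_zero
  have hpG0 : pG ≠ 0 := (Matrix.charpoly_monic _).ne_zero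
  have hpH0 : pH ≠ 0 := (Matrix.charpoly_monic _).ne_zero
  have hr1root : (r₁ : ℝ) ∈ p₁.roots := by
    rw [Polynomial.mem_roots']
    exact ⟨hp₁0, by rw [Polynomial.IsRoot, hp₁def, eval_charpoly']; exact det_at_reg _ r₁ hreg⟩
  obtain ⟨q, hq⟩ := NP_factor n k hn (adjMat ℝ F) f (r₁ : ℝ) ((m : ℝ) - 1)
  have hk_le_n : k ≤ n := by
    have := Fintype.card_le_of_embedding f
    rwa [Fintype.card_fin, hn] at this
  have hpid := pid n m r₁ hn hm hm2 F H v hdeg hreg f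
  rw [hq] at hpid
  have hXr : (X - C (r₁:ℝ)) ≠ 0 := Polynomial.X_sub_C_ne_zero (r₁:ℝ)
  have hpid' : (X - C (r₁:ℝ)) ^ k * pG = p₁ ^ k * q := by
    have h1 : (X - C (r₁:ℝ)) ^ (n - k) * ((X - C (r₁:ℝ)) ^ k * pG)
        = (X - C (r₁:ℝ)) ^ (n - k) * (p₁ ^ k * q) := by
      rw [← mul_assoc, ← pow_add, Nat.sub_add_cancel hk_le_n, hpid]
      ring
    exact mul_left_cancel₀ (pow_ne_zero _ hXr) h1
  constructor
  · intro lam hlam hα hβ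
    have hlam' : lam ∈ pH.roots := by
      rw [hpHdef, ← aSpec_eq]
      exact hlam
    have hq0 : q ≠ 0 := by
      intro h
      rw [h, mul_zero] at hpid'
      exact mul_ne_zero (pow_ne_zero _ hXr) hpG0 hpid'
    have hpid2 := pid2 m r₁ hm hm2 H v hdeg hreg α β hαβ
    have hrootsL : ((X - C (r₁:ℝ)) ^ k * pG).roots = k • {(r₁:ℝ)} + pG.roots := by
      rw [Polynomial.roots_mul (mul_ne_zero (pow_ne_zero _ hXr) hpG0),
        Polynomial.roots_pow, Polynomial.roots_X_sub_C]
    have hrootsR : (p₁ ^ k * q).roots = k • p₁.roots + q.roots := by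
      rw [Polynomial.roots_mul (mul_ne_zero (pow_ne_zero _ hp₁0) hq0), Polynomial.roots_pow]
    have hrootsL2 : ((X - C (r₁:ℝ)) * pH).roots = {(r₁:ℝ)} + pH.roots := by
      rw [Polynomial.roots_mul (mul_ne_zero hXr hpH0), Polynomial.roots_X_sub_C]
    have hrootsR2 : ((X - C α) * (X - C β) * p₁).roots = {α} + {β} + p₁.roots := by
      rw [Polynomial.roots_mul (mul_ne_zero (mul_ne_zero (Polynomial.X_sub_C_ne_zero α)
          (Polynomial.X_sub_C_ne_zero β)) hp₁0),
        Polynomial.roots_mul (mul_ne_zero (Polynomial.X_sub_C_ne_zero α)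
          (Polynomial.X_sub_C_ne_zero β)),
        Polynomial.roots_X_sub_C, Polynomial.roots_X_sub_C]
    have hcount2 : Multiset.count lam ({(r₁:ℝ)} + pH.roots)
        = Multiset.count lam ({α} + {β} + p₁.roots) := by
      rw [← hrootsL2, ← hrootsR2, hpid2]
    have hcount1 : Multiset.count lam (k • {(r₁:ℝ)} + pG.roots)
        = Multiset.count lam (k • p₁.roots + q.roots) := by
      rw [← hrootsL, ← hrootsR, hpid']
    simp only [Multiset.count_add, Multiset.count_nsmul, Multiset.count_singleton]
      at hcount1 hcount2
    rw [if_neg hα, if_neg hβ] at hcount2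
    have hmem : 1 ≤ Multiset.count lam pH.roots := Multiset.one_le_count_iff_mem.mpr hlam'
    rw [aSpec_eq, ← hpGdef]
    by_cases hr : lam = (r₁:ℝ)
    · rw [if_pos hr] at hcount1 hcount2
      have hc : Multiset.count lam p₁.roots = 1 + Multiset.count lam pH.roots := by omega
      have e1 : k * Multiset.count lam p₁.roots = k + k * Multiset.count lam pH.roots := by
        rw [hc]; ring
      have e2 : k * 1 ≤ k * Multiset.count lam pH.roots := Nat.mul_le_mul_left k hmem
      omega
    · rw [if_neg hr] at hcount1 hcount2
      have hc : Multiset.count lam p₁.roots = Multiset.count lam pH.roots := by omega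
      have e1 : k * Multiset.count lam p₁.roots = k * Multiset.count lam pH.roots := by rw [hc]
      have e2 : k * 1 ≤ k * Multiset.count lam pH.roots := Nat.mul_le_mul_left k hmem
      omega
  · intro x hxne
    have hx0 : x - (r₁:ℝ) ≠ 0 := sub_ne_zero_of_ne hxne
    have hev := congrArg (Polynomial.eval x) (pid n m r₁ hn hm hm2 F H v hdeg hreg f)
    simp only [Polynomial.eval_mul, Polynomial.eval_pow, Polynomial.eval_sub, Polynomial.eval_X,
      Polynomial.eval_C] at hev
    rw [eval_charpoly', eval_charpoly', NP_det_eval] at hev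
    have hc : (x - (r₁:ℝ)) • ((((m:ℝ) - 1)/(x - (r₁:ℝ)))
          • embedMatrix (⇑f) (1 : Matrix (Fin k) (Fin k) ℝ))
        = ((m:ℝ) - 1) • embedMatrix (⇑f) (1 : Matrix (Fin k) (Fin k) ℝ) := by
      rw [smul_smul, mul_div_cancel₀ _ hx0]
    have hsm : ((x - (r₁:ℝ)) • (x • (1:Matrix V V ℝ) - adjMat ℝ F)
          - ((m:ℝ) - 1) • embedMatrix (⇑f) (1 : Matrix (Fin k) (Fin k) ℝ))
        = (x - (r₁:ℝ)) • (x • (1:Matrix V V ℝ) - adjMat ℝ F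
            - (((m:ℝ) - 1)/(x - (r₁:ℝ))) • embedMatrix (⇑f) (1 : Matrix (Fin k) (Fin k) ℝ)) := by
      conv_rhs => rw [smul_sub, hc]
    rw [hsm, Matrix.det_smul, hn] at hev
    have hdetG : (x • (1 : Matrix (V ⊕ (Fin k × {w : W // w ≠ v}))
            (V ⊕ (Fin k × {w : W // w ≠ v})) ℝ) - adjMat ℝ (pocketGraph F H v f)).det
        = (x • (1 : Matrix {w : W // w ≠ v} {w : W // w ≠ v} ℝ) - adjMat ℝ (delVert H v)).det ^ k
          * (x • (1:Matrix V V ℝ) - adjMat ℝ F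
            - (((m:ℝ) - 1)/(x - (r₁:ℝ)))
                • embedMatrix (⇑f) (1 : Matrix (Fin k) (Fin k) ℝ)).det := by
      refine mul_left_cancel₀ (pow_ne_zero n hx0) ?_
      rw [hev]
      ring
    have hspec : aSpec (delVert H v) = p₁.roots := by rw [aSpec_eq, ← hp₁def]
    have hdetS : (x • (1 : Matrix {w : W // w ≠ v} {w : W // w ≠ v} ℝ)
          - adjMat ℝ (delVert H v)).det
        = (x - (r₁:ℝ)) * (((p₁.roots.erase (r₁:ℝ)).map fun μ => x - μ).prod) := by
      rw [← eval_charpoly', ← hp₁def]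
      conv_lhs => rw [show p₁ = (p₁.roots.map fun μ => X - C μ).prod from
        herm_charpoly_prod_roots _ (adj_isHerm _)]
      rw [Polynomial.eval_multiset_prod, Multiset.map_map]
      have hmm : (p₁.roots.map (Polynomial.eval x ∘ fun μ => X - C μ))
          = p₁.roots.map (fun μ => x - μ) := Multiset.map_congr rfl (fun μ _ => by simp)
      rw [hmm, ← Multiset.prod_map_erase (f := fun μ => x - μ) hr1root]
    rw [hdetG, hspec, hdetS, sub_add_eq_sub_sub, mul_pow]
end

section
/- Let H_1 be an r_1-regular graph and suppose m − 1 = p(r_1 − 1) for some integer p, where p ≥ 3 and r_1 ≥ 2. Let G = G[F,V_k,H_v] and G* = G[F,V_k,H_v*] with |V_k| = k, where H_v* is the graph H_v whose deleted graph H_1 is replaced by G_p^{r_1} = C_p □ K_{r_1−1}. Let α, β be the two roots of x² − r_1 x − (m−1) = 0. Then the multiset σ(A(G)) equals the union of: (a) each λ ∈ σ(A(H_v)) \ {α, β} taken with multiplicity k, and (b) the multiset obtained from σ(A(G*)) by removing k copies of each eigenvalue λ_j(G_p^{r_1}), j = 1,…,m−2 (i.e. all eigenvalues of A(G_p^{r_1})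 except its largest eigenvalue r_1). -/
open Matrix BigOperators
open scoped Classical

namespace CorAux
open Polynomial

variable {n : Type*} [Fintype n] [DecidableEq n]

lemma charpoly_conj (A P Q D : Matrix n n ℝ) (hPQ : P * Q = 1) (h : A * P = P * D) :
    A.charpoly = D.charpoly := by
  have hA : A = P * D * Q := by
    have h2 : A * (P * Q) = P * D * Q := by rw [← mul_assoc, h]
    rwa [hPQ, mul_one] at h2
  have hPQc : P.map (C : ℝ → ℝ[X]) * Q.map C = 1 := by
    rw [← Matrix.map_mul (f := (C : ℝ →+* ℝ[X])), hPQ,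
      Matrix.map_one _ (map_zero C) (map_one C)]
  have hsc : Matrix.scalar n (X : ℝ[X]) = (X : ℝ[X]) • (1 : Matrix n n ℝ[X]) := by
    rw [scalar_apply]
    ext i j
    by_cases hij : i = j <;> simp [Matrix.diagonal_apply, hij]
  have key : charmatrix A = P.map C * charmatrix D * Q.map C := by
    rw [hA, charmatrix, charmatrix, RingHom.mapMatrix_apply, RingHom.mapMatrix_apply,
      Matrix.map_mul (f := (C : ℝ →+* ℝ[X])), Matrix.map_mul (f := (C : ℝ →+* ℝ[X])), hsc,
      mul_sub, sub_mul, mul_smul_comm, smul_mul_assoc, mul_one, hPQc]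
  rw [Matrix.charpoly, Matrix.charpoly, key, det_mul, det_mul, mul_right_comm,
    ← det_mul, hPQc, det_one, one_mul]

/-- Compression of `A` to the complement of `w₀`. -/
noncomputable def Nm {W' : Type*} (A : Matrix W' W' ℝ) (w₀ : W') :
    Matrix {w : W' // w ≠ w₀} {w : W' // w ≠ w₀} ℝ :=
  Matrix.of fun x y => A x.1 y.1 - A w₀ y.1

def splitEquiv {W' : Type*} [DecidableEq W'] (w₀ : W') : W' ≃ Unit ⊕ {w : W' // w ≠ w₀} where
  toFun x := if h : x = w₀ then Sum.inl () else Sum.inr ⟨x, h⟩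
  invFun := Sum.elim (fun _ => w₀) Subtype.val
  left_inv x := by by_cases h : x = w₀ <;> simp [h]
  right_inv s := by
    rcases s with _ | w
    · simp
    · simp [w.2]

lemma charpoly_unit (r : ℝ) : (Matrix.of fun _ _ : Unit => r).charpoly = X - C r := by
  rw [Matrix.charpoly, Matrix.det_unique, charmatrix_apply_eq, Matrix.of_apply]

lemma charpoly_rowsum {W' : Type*} [Fintype W'] [DecidableEq W'] (A : Matrix W' W' ℝ)
    (r : ℝ) (w₀ : W') (hrow : ∀ x, ∑ y, A x y = r) :
    A.charpoly = (X - C r) * (Nm A w₀).charpoly := by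
  set U : Matrix W' W' ℝ :=
    Matrix.of fun x y => if x = w₀ then 0 else if y = w₀ then (1:ℝ) else 0 with hU
  have hUU : U * U = 0 := by
    ext x y
    rw [Matrix.mul_apply]
    refine (Finset.sum_eq_zero fun z _ => ?_).trans rfl
    by_cases hx : x = w₀ <;> by_cases hz : z = w₀ <;> simp [hU, hx, hz]
  have hPQ : (1 + U) * (1 - U) = 1 := by
    rw [mul_sub, mul_one, add_mul, one_mul, hUU]
    abel
  set D₁ : Matrix W' W' ℝ := Matrix.of fun x y =>
    if y = w₀ then (if x = w₀ then r else 0)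
    else if x = w₀ then A w₀ y else A x y - A w₀ y with hD₁
  have hAU : ∀ x y, (A * U) x y = if y = w₀ then r - A x w₀ else 0 := by
    intro x y
    rw [Matrix.mul_apply]
    by_cases hy : y = w₀
    · rw [if_pos hy]
      have h1 : ∀ z, A x z * U z y = A x z - (if z = w₀ then A x z else 0) := by
        intro z; by_cases hz : z = w₀ <;> simp [hU, hz, hy]
      simp only [h1]
      rw [Finset.sum_sub_distrib, hrow, Finset.sum_ite_eq' Finset.univ w₀ (fun z => A x z)]
      simp [hy]
    · rw [if_neg hy]
      refine Finset.sum_eq_zero fun z _ => ?_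
      by_cases hz : z = w₀ <;> simp [hU, hz, hy]
  have hUD : ∀ x y, (U * D₁) x y = if x = w₀ then 0 else D₁ w₀ y := by
    intro x y
    rw [Matrix.mul_apply]
    by_cases hx : x = w₀
    · simp [hU, hx]
    · simp only [hU, Matrix.of_apply, if_neg hx, ite_mul, one_mul, zero_mul]
      rw [Finset.sum_ite_eq' Finset.univ w₀ (fun z => D₁ z y)]
      simp [hx]
  have hKey : A * (1 + U) = (1 + U) * D₁ := by
    rw [mul_add, mul_one, add_mul, one_mul]
    ext x y
    rw [Matrix.add_apply, Matrix.add_apply, hAU, hUD]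
    by_cases hx : x = w₀ <;> by_cases hy : y = w₀ <;>
      simp [hD₁, hx, hy] <;> ring
  have hCP : A.charpoly = D₁.charpoly := charpoly_conj A (1 + U) (1 - U) D₁ hPQ hKey
  have hRe : reindex (splitEquiv w₀) (splitEquiv w₀) D₁ =
      fromBlocks (Matrix.of fun _ _ : Unit => r)
        (Matrix.of fun _ (q : {w : W' // w ≠ w₀}) => A w₀ q.1) 0 (Nm A w₀) := by
    ext x y
    rcases x with _ | x <;> rcases y with _ | y
    · simp [splitEquiv, hD₁]
    · simp [splitEquiv, hD₁, y.2]
    · simp [splitEquiv, hD₁, x.2]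
    · simp [splitEquiv, hD₁, Nm, x.2, y.2]
  have := Matrix.charpoly_reindex (splitEquiv w₀) D₁
  rw [hCP, ← this, hRe, Matrix.charpoly_fromBlocks_zero₂₁, charpoly_unit]




lemma charpoly_blockDiagonal {o m : Type*} [Fintype o] [DecidableEq o] [Fintype m]
    [DecidableEq m] (N : Matrix m m ℝ) :
    (blockDiagonal (fun _ : o => N)).charpoly = N.charpoly ^ (Fintype.card o) := by
  have h : charmatrix (blockDiagonal (fun _ : o => N))
      = blockDiagonal (fun _ : o => charmatrix N) := by
    ext x y
    rcases x with ⟨i, a⟩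
    rcases y with ⟨j, b⟩
    rw [charmatrix_apply, blockDiagonal_apply, blockDiagonal_apply]
    by_cases hab : a = b
    · subst hab
      by_cases hij : i = j
      · subst hij
        simp [charmatrix_apply, Matrix.diagonal_apply]
      · simp [charmatrix_apply, Matrix.diagonal_apply, hij, Prod.ext_iff]
    · simp [Matrix.diagonal_apply, hab, Prod.ext_iff]
  rw [Matrix.charpoly, h, Matrix.det_blockDiagonal]
  simp [Matrix.charpoly, Finset.prod_const, Finset.card_univ]

noncomputable def Mblk {V : Type*} [Fintype V] (F : SimpleGraph V) {k : ℕ} (f : Fin k ↪ V)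
    (m r₁ : ℕ) : Matrix (V ⊕ Fin k) (V ⊕ Fin k) ℝ :=
  Matrix.of fun x y =>
    Sum.elim
      (fun b => Sum.elim (fun a => adjMat ℝ F b a)
        (fun i => if b = f i then (m : ℝ) - 1 else 0) y)
      (fun j => Sum.elim (fun a => if a = f j then (1:ℝ) else 0)
        (fun i => if j = i then (r₁ : ℝ) else 0) y) x

def pocketEquiv {V W' : Type*} [DecidableEq W'] (k : ℕ) (w₀ : W') :
    (V ⊕ (Fin k × W')) ≃ ((V ⊕ Fin k) ⊕ (Fin k × {w : W' // w ≠ w₀})) where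
  toFun := Sum.elim (fun a => Sum.inl (Sum.inl a))
    (fun p => if h : p.2 = w₀ then Sum.inl (Sum.inr p.1) else Sum.inr (p.1, ⟨p.2, h⟩))
  invFun := Sum.elim (Sum.elim (fun a => Sum.inl a) (fun i => Sum.inr (i, w₀)))
    (fun q => Sum.inr (q.1, q.2.1))
  left_inv x := by
    rcases x with a | ⟨i, w⟩
    · rfl
    · by_cases h : w = w₀ <;> simp [h]
  right_inv y := by
    rcases y with (a | i) | ⟨i, w⟩
    · rfl
    · simp
    · simp [w.2]


lemma pocket_charpoly {V W : Type*} [Fintype V] [DecidableEq V] [Fintype W] [DecidableEq W]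
    (F : SimpleGraph V) (H : SimpleGraph W) (v : W) {k : ℕ} (f : Fin k ↪ V) (m r₁ : ℕ)
    (hm : Fintype.card W = m)
    (hdeg : ∀ w : W, w ≠ v → H.Adj v w) (hreg : IsReg (delVert H v) r₁)
    (w₀ : {w : W // w ≠ v}) :
    (adjMat ℝ (pocketGraph F H v f)).charpoly
      = (Mblk F f m r₁).charpoly * ((Nm (adjMat ℝ (delVert H v)) w₀).charpoly) ^ k := by
  classical
  set A₁ : Matrix {w : W // w ≠ v} {w : W // w ≠ v} ℝ := adjMat ℝ (delVert H v) with hA₁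
  set AG : Matrix (V ⊕ (Fin k × {w : W // w ≠ v})) (V ⊕ (Fin k × {w : W // w ≠ v})) ℝ :=
    adjMat ℝ (pocketGraph F H v f) with hAG
  have hne : Nonempty W := ⟨v⟩
  have hm1 : 1 ≤ m := hm ▸ Fintype.card_pos
  have hW' : Fintype.card {w : W // w ≠ v} = m - 1 := by
    have h2 := Fintype.card_subtype_compl (fun w : W => w = v)
    rw [Fintype.card_subtype_eq v, hm] at h2
    exact h2
  have hcast : ((m - 1 : ℕ) : ℝ) = (m : ℝ) - 1 := by
    rw [Nat.cast_sub hm1, Nat.cast_one]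
  have hrowA₁ : ∀ x : {w : W // w ≠ v}, (∑ y, A₁ x y) = (r₁ : ℝ) := by
    intro x
    have hx := hreg x
    rw [hA₁]
    simp only [adjMat, Matrix.of_apply]
    rw [Finset.sum_boole]
    rw [gdeg] at hx
    norm_cast
  -- entry lemmas
  have E1 : ∀ b a, AG (Sum.inl b) (Sum.inl a) = adjMat ℝ F b a := by
    intro b a
    rw [hAG]
    simp only [adjMat, Matrix.of_apply]
    exact if_congr Iff.rfl rfl rfl
  have E2 : ∀ b i (w : {w : W // w ≠ v}), AG (Sum.inl b) (Sum.inr (i, w))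
      = if b = f i then 1 else 0 := by
    intro b i w
    rw [hAG]
    simp only [adjMat, Matrix.of_apply]
    exact if_congr (and_iff_left (hdeg w.1 w.2)) rfl rfl
  have E3 : ∀ j (x' : {w : W // w ≠ v}) a, AG (Sum.inr (j, x')) (Sum.inl a)
      = if a = f j then 1 else 0 := by
    intro j x' a
    rw [hAG]
    simp only [adjMat, Matrix.of_apply]
    exact if_congr (and_iff_left (hdeg x'.1 x'.2)) rfl rfl
  have E4 : ∀ j (x' : {w : W // w ≠ v}) i (w : {w : W // w ≠ v}),
      AG (Sum.inr (j, x')) (Sum.inr (i, w)) = if j = i then A₁ x' w else 0 := by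
    intro j x' i w
    rw [hAG, hA₁]
    simp only [adjMat, Matrix.of_apply]
    by_cases h1 : j = i <;> by_cases h2 : (delVert H v).Adj x' w
    · have hadj : (pocketGraph F H v f).Adj (Sum.inr (j, x')) (Sum.inr (i, w)) := ⟨h1, h2⟩
      rw [if_pos hadj]
      simp [h1, h2]
    · have hadj : ¬ (pocketGraph F H v f).Adj (Sum.inr (j, x')) (Sum.inr (i, w)) :=
        fun hc => h2 hc.2
      rw [if_neg hadj]
      simp [h2]
    · have hadj : ¬ (pocketGraph F H v f).Adj (Sum.inr (j, x')) (Sum.inr (i, w)) :=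
        fun hc => h1 hc.1
      rw [if_neg hadj]
      simp [h1]
    · have hadj : ¬ (pocketGraph F H v f).Adj (Sum.inr (j, x')) (Sum.inr (i, w)) :=
        fun hc => h1 hc.1
      rw [if_neg hadj]
      simp [h1]
  -- row sums of AG
  have S1 : ∀ b j, (∑ w : {w : W // w ≠ v}, AG (Sum.inl b) (Sum.inr (j, w)))
      = if b = f j then (m : ℝ) - 1 else 0 := by
    intro b j
    simp only [E2]
    rw [Finset.sum_const, Finset.card_univ, hW', nsmul_eq_mul, hcast]
    by_cases hb : b = f j <;> simp [hb]
  have S2 : ∀ j (x' : {w : W // w ≠ v}) i,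
      (∑ w : {w : W // w ≠ v}, AG (Sum.inr (j, x')) (Sum.inr (i, w)))
      = if j = i then (r₁ : ℝ) else 0 := by
    intro j x' i
    by_cases hji : j = i
    · simp only [E4, hji, if_pos rfl]
      exact hrowA₁ x'
    · simp [E4, hji]
  -- the nilpotent part and the conjugated matrix
  set Uk : Matrix (V ⊕ (Fin k × {w : W // w ≠ v})) (V ⊕ (Fin k × {w : W // w ≠ v})) ℝ :=
    Matrix.of fun x z =>
      Sum.elim (fun _ => (0:ℝ))
        (fun q => Sum.elim (fun _ => (0:ℝ))
          (fun p => if q.1 = p.1 ∧ q.2 ≠ w₀ ∧ p.2 = w₀ then 1 else 0) z) x with hUk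
  set Dk : Matrix (V ⊕ (Fin k × {w : W // w ≠ v})) (V ⊕ (Fin k × {w : W // w ≠ v})) ℝ :=
    Matrix.of fun x y =>
      Sum.elim
        (fun b => Sum.elim (fun a => adjMat ℝ F b a)
          (fun p => if p.2 = w₀ then (if b = f p.1 then (m : ℝ) - 1 else 0)
            else (if b = f p.1 then 1 else 0)) y)
        (fun q => Sum.elim
          (fun a => if q.2 = w₀ ∧ a = f q.1 then (1:ℝ) else 0)
          (fun p => if q.1 = p.1 then
              (if p.2 = w₀ then (if q.2 = w₀ then (r₁ : ℝ) else 0)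
               else (if q.2 = w₀ then A₁ w₀ p.2 else A₁ q.2 p.2 - A₁ w₀ p.2))
            else 0) y) x with hDk
  have hUU : Uk * Uk = 0 := by
    ext x y
    rw [Matrix.mul_apply]
    refine (Finset.sum_eq_zero fun z _ => ?_).trans rfl
    rcases z with c | q
    · simp [hUk]
    · rcases x with b | q'
      · simp [hUk]
      · rcases y with a | p
        · simp [hUk]
        · by_cases hq : q.2 = w₀ <;> simp [hUk, hq]
  have hPQ : (1 + Uk) * (1 - Uk) = 1 := by
    rw [mul_sub, mul_one, add_mul, one_mul, hUU]
    abel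
  have hAU : ∀ x (y : V ⊕ (Fin k × {w : W // w ≠ v})), (AG * Uk) x y
      = Sum.elim (fun _ => (0:ℝ))
        (fun p => if p.2 = w₀ then
            (∑ w' : {w : W // w ≠ v}, AG x (Sum.inr (p.1, w'))) - AG x (Sum.inr (p.1, w₀))
          else 0) y := by
    intro x y
    rw [Matrix.mul_apply]
    rcases y with a | ⟨i, w⟩
    · refine (Finset.sum_eq_zero fun z _ => ?_).trans rfl
      rcases z with c | q <;> simp [hUk]
    · rw [Fintype.sum_sum_type]
      have hz1 : (∑ c : V, AG x (Sum.inl c) * Uk (Sum.inl c) (Sum.inr (i, w))) = 0 :=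
        Finset.sum_eq_zero fun c _ => by simp [hUk]
      rw [hz1, zero_add, Fintype.sum_prod_type]
      by_cases hw : w = w₀
      · have step : ∀ i' : Fin k,
            (∑ w' : {w : W // w ≠ v}, AG x (Sum.inr (i', w')) * Uk (Sum.inr (i', w')) (Sum.inr (i, w)))
            = if i' = i then
                ((∑ w' : {w : W // w ≠ v}, AG x (Sum.inr (i', w'))) - AG x (Sum.inr (i', w₀)))
              else 0 := by
          intro i'
          by_cases hii : i' = i
          · rw [if_pos hii]
            have hterm : ∀ w' : {w : W // w ≠ v},
                AG x (Sum.inr (i', w')) * Uk (Sum.inr (i', w')) (Sum.inr (i, w))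
                = AG x (Sum.inr (i', w')) - (if w' = w₀ then AG x (Sum.inr (i', w')) else 0) := by
              intro w'
              by_cases hw' : w' = w₀ <;> simp [hUk, hw', hii, hw]
            simp only [hterm]
            rw [Finset.sum_sub_distrib,
              Finset.sum_ite_eq' Finset.univ w₀ (fun w' => AG x (Sum.inr (i', w')))]
            simp
          · rw [if_neg hii]
            refine Finset.sum_eq_zero fun w' _ => ?_
            simp [hUk, hii]
        rw [Finset.sum_congr rfl (fun i' _ => step i'),
          Finset.sum_ite_eq' Finset.univ i
            (fun i' => (∑ w' : {w : W // w ≠ v}, AG x (Sum.inr (i', w'))) - AG x (Sum.inr (i', w₀)))]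
        simp [hw]
      · have hz2 : ∀ i' : Fin k,
            (∑ w' : {w : W // w ≠ v}, AG x (Sum.inr (i', w')) * Uk (Sum.inr (i', w')) (Sum.inr (i, w))) = 0 := by
          intro i'
          refine Finset.sum_eq_zero fun w' _ => ?_
          simp [hUk, hw]
        rw [Finset.sum_congr rfl (fun i' _ => hz2 i')]
        simp [hw]
  have hUD : ∀ (x : V ⊕ (Fin k × {w : W // w ≠ v})) y, (Uk * Dk) x y
      = Sum.elim (fun _ => (0:ℝ))
        (fun q => if q.2 = w₀ then 0 else Dk (Sum.inr (q.1, w₀)) y) x := by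
    intro x y
    rw [Matrix.mul_apply]
    rcases x with b | ⟨j, x'⟩
    · refine (Finset.sum_eq_zero fun z _ => ?_).trans rfl
      simp [hUk]
    · rw [Fintype.sum_sum_type]
      have hz1 : (∑ c : V, Uk (Sum.inr (j, x')) (Sum.inl c) * Dk (Sum.inl c) y) = 0 :=
        Finset.sum_eq_zero fun c _ => by simp [hUk]
      rw [hz1, zero_add, Fintype.sum_prod_type]
      by_cases hx' : x' = w₀
      · have hz2 : ∀ i : Fin k,
            (∑ w : {w : W // w ≠ v}, Uk (Sum.inr (j, x')) (Sum.inr (i, w)) * Dk (Sum.inr (i, w)) y) = 0 := by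
          intro i
          refine Finset.sum_eq_zero fun w _ => ?_
          simp [hUk, hx']
        rw [Finset.sum_congr rfl (fun i _ => hz2 i)]
        simp [hx']
      · have step : ∀ i : Fin k,
            (∑ w : {w : W // w ≠ v}, Uk (Sum.inr (j, x')) (Sum.inr (i, w)) * Dk (Sum.inr (i, w)) y)
            = if i = j then Dk (Sum.inr (j, w₀)) y else 0 := by
          intro i
          by_cases hij : i = j
          · rw [if_pos hij]
            have hterm : ∀ w : {w : W // w ≠ v},
                Uk (Sum.inr (j, x')) (Sum.inr (i, w)) * Dk (Sum.inr (i, w)) y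
                = if w = w₀ then Dk (Sum.inr (i, w)) y else 0 := by
              intro w
              by_cases hw : w = w₀ <;> simp [hUk, hij.symm, hx', hw]
            simp only [hterm]
            rw [Finset.sum_ite_eq' Finset.univ w₀ (fun w => Dk (Sum.inr (i, w)) y)]
            simp [hij]
          · rw [if_neg hij]
            refine Finset.sum_eq_zero fun w _ => ?_
            have hji : ¬ (j = i) := fun h => hij h.symm
            simp [hUk, hji]
        rw [Finset.sum_congr rfl (fun i _ => step i),
          Finset.sum_ite_eq' Finset.univ j (fun _ => Dk (Sum.inr (j, w₀)) y)]
        simp [hx']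
  have hKey : AG * (1 + Uk) = (1 + Uk) * Dk := by
    rw [mul_add, mul_one, add_mul, one_mul]
    ext x y
    rw [Matrix.add_apply, Matrix.add_apply, hAU, hUD]
    rcases x with b | ⟨j, x'⟩ <;> rcases y with a | ⟨i, w⟩
    · simp [E1, hDk]
    · by_cases hw : w = w₀
      · rw [E2]
        simp only [Sum.elim_inl, Sum.elim_inr, hw, if_pos rfl]
        rw [S1, E2, hDk]
        simp only [Matrix.of_apply, Sum.elim_inl, Sum.elim_inr, if_pos rfl]
        split_ifs <;> ring
      · rw [E2]
        simp only [Sum.elim_inl, Sum.elim_inr, hw, if_neg hw]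
        rw [hDk]
        simp only [Matrix.of_apply, Sum.elim_inl, Sum.elim_inr, if_neg hw]
        simp
    · rw [E3]
      simp only [Sum.elim_inl, Sum.elim_inr]
      rw [hDk]
      simp only [Matrix.of_apply, Sum.elim_inl, Sum.elim_inr]
      by_cases hx' : x' = w₀
      · simp [hx']
      · simp [hx']
    · simp only [Sum.elim_inr]
      rw [E4]
      by_cases hw : w = w₀ <;> by_cases hx' : x' = w₀
      · rw [if_pos hw, S2, E4, hDk]
        simp only [Matrix.of_apply, Sum.elim_inr, hw, hx', if_pos rfl]
        split_ifs <;> ring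
      · rw [if_pos hw, S2, E4, hDk]
        simp only [Matrix.of_apply, Sum.elim_inr, hw, if_neg hx', if_pos rfl]
        split_ifs <;> ring
      · rw [if_neg hw, hDk]
        simp only [Matrix.of_apply, Sum.elim_inr, if_neg hw, hx', if_pos rfl]
        split_ifs <;> ring
      · rw [if_neg hw, hDk]
        simp only [Matrix.of_apply, Sum.elim_inr, if_neg hw, if_neg hx']
        split_ifs <;> ring
  have hCP : AG.charpoly = Dk.charpoly := charpoly_conj AG (1 + Uk) (1 - Uk) Dk hPQ hKey
  -- reindex to block form
  set Bblk : Matrix (V ⊕ Fin k) (Fin k × {w : {w : W // w ≠ v} // w ≠ w₀}) ℝ :=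
    Matrix.of fun x q => Sum.elim (fun b => if b = f q.1 then (1:ℝ) else 0)
      (fun j => if j = q.1 then A₁ w₀ q.2.1 else 0) x with hBblk
  set Kblk : Matrix (Fin k × {w : {w : W // w ≠ v} // w ≠ w₀})
      (Fin k × {w : {w : W // w ≠ v} // w ≠ w₀}) ℝ :=
    Matrix.of fun q p => if q.1 = p.1 then Nm A₁ w₀ q.2 p.2 else 0 with hKblk
  have hRe : reindex (pocketEquiv k w₀) (pocketEquiv k w₀) Dk
      = fromBlocks (Mblk F f m r₁) Bblk 0 Kblk := by
    ext x y
    rw [Matrix.reindex_apply, Matrix.submatrix_apply]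
    rcases x with (b | j) | ⟨j, xq⟩ <;> rcases y with (a | i) | ⟨i, wq⟩
    · simp [pocketEquiv, hDk, Mblk]
    · simp [pocketEquiv, hDk, Mblk]
    · simp [pocketEquiv, hDk, hBblk, wq.2]
    · simp [pocketEquiv, hDk, Mblk]
    · simp [pocketEquiv, hDk, Mblk]
    · simp [pocketEquiv, hDk, hBblk, wq.2]
    · simp [pocketEquiv, hDk, xq.2]
    · simp [pocketEquiv, hDk, xq.2]
    · simp [pocketEquiv, hDk, hKblk, Nm, xq.2, wq.2]
  have hKb : Kblk.charpoly = ((Nm A₁ w₀).charpoly) ^ k := by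
    have hre2 : Kblk = reindex (Equiv.prodComm {w : {w : W // w ≠ v} // w ≠ w₀} (Fin k))
        (Equiv.prodComm {w : {w : W // w ≠ v} // w ≠ w₀} (Fin k))
        (blockDiagonal (fun _ : Fin k => Nm A₁ w₀)) := by
      ext ⟨i, xq⟩ ⟨j, yq⟩
      simp [hKblk, blockDiagonal_apply]
    rw [hre2, Matrix.charpoly_reindex, charpoly_blockDiagonal, Fintype.card_fin]
  rw [hCP, ← Matrix.charpoly_reindex (pocketEquiv k w₀) Dk, hRe,
    Matrix.charpoly_fromBlocks_zero₂₁, hKb]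


lemma rowsum_of_reg {α : Type*} [Fintype α] (G : SimpleGraph α) (r : ℕ) (h : IsReg G r)
    (x : α) : (∑ y, adjMat ℝ G x y) = (r : ℝ) := by
  simp only [adjMat, Matrix.of_apply]
  rw [Finset.sum_boole]
  have hx := h x
  rw [gdeg] at hx
  norm_cast

lemma gdeg_iso {α β : Type*} [Fintype α] [Fintype β] (G₁ : SimpleGraph α) (G₂ : SimpleGraph β)
    (e : α ≃ β) (h : ∀ x y, G₁.Adj x y ↔ G₂.Adj (e x) (e y)) (x : α) :
    gdeg G₁ x = gdeg G₂ (e x) := by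
  rw [gdeg, gdeg, ← Finset.card_image_of_injective
    (Finset.univ.filter fun y => G₁.Adj x y) e.injective]
  congr 1
  ext z
  simp only [Finset.mem_image, Finset.mem_filter, Finset.mem_univ, true_and]
  constructor
  · rintro ⟨y, hy, rfl⟩
    exact (h x y).mp hy
  · intro hz
    exact ⟨e.symm z, (h x _).mpr (by simpa using hz), by simp⟩

lemma gdeg_eq_degree {α : Type*} [Fintype α] (G : SimpleGraph α) [DecidableRel G.Adj] (x : α) :
    gdeg G x = G.degree x := by
  rw [gdeg, SimpleGraph.degree, SimpleGraph.neighborFinset_eq_filter]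
  congr 1
  exact Finset.filter_congr_decidable _ _ _

lemma box_reg (p r₁ : ℕ) (hp : 3 ≤ p) (hr₁ : 2 ≤ r₁) :
    IsReg ((SimpleGraph.cycleGraph p).boxProd (⊤ : SimpleGraph (Fin (r₁ - 1)))) r₁ := by
  intro x
  obtain ⟨n, rfl⟩ : ∃ n, p = n + 3 := ⟨p - 3, by omega⟩
  haveI : DecidableRel ((SimpleGraph.cycleGraph (n + 3)).boxProd
      (⊤ : SimpleGraph (Fin (r₁ - 1)))).Adj := Classical.decRel _
  rw [gdeg_eq_degree, SimpleGraph.degree_boxProd, SimpleGraph.cycleGraph_degree_three_le,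
    SimpleGraph.complete_graph_degree, Fintype.card_fin]
  omega

def unitSumEquiv {X : Type*} : {w : Unit ⊕ X // w ≠ Sum.inl ()} ≃ X where
  toFun x := match x with
    | ⟨Sum.inl (), h⟩ => absurd rfl h
    | ⟨Sum.inr b, _⟩ => b
  invFun b := ⟨Sum.inr b, Sum.inr_ne_inl⟩
  left_inv x := by
    rcases x with ⟨u | b, h⟩
    · cases u; exact absurd rfl h
    · rfl
  right_inv b := rfl

lemma unitSum_adj {X : Type*} (B : SimpleGraph X) (x y : {w : Unit ⊕ X // w ≠ Sum.inl ()}) :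
    (delVert (sgJoin (⊤ : SimpleGraph Unit) B) (Sum.inl ())).Adj x y
      ↔ B.Adj (unitSumEquiv x) (unitSumEquiv y) := by
  rcases x with ⟨u | b, h⟩
  · cases u; exact absurd rfl h
  · rcases y with ⟨u | c, h'⟩
    · cases u; exact absurd rfl h'
    · exact Iff.rfl

lemma delVert_join_reg {X : Type*} [Fintype X] [DecidableEq X] (B : SimpleGraph X) (r : ℕ) (h : IsReg B r) :
    IsReg (delVert (sgJoin (⊤ : SimpleGraph Unit) B) (Sum.inl ())) r := by
  intro x
  rw [gdeg_iso _ B unitSumEquiv (fun a b => unitSum_adj B a b) x]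
  exact h _

lemma adjMat_delVert_join {X : Type*} [Fintype X] [DecidableEq X] (B : SimpleGraph X) :
    adjMat ℝ (delVert (sgJoin (⊤ : SimpleGraph Unit) B) (Sum.inl ()))
      = (adjMat ℝ B).submatrix unitSumEquiv unitSumEquiv := by
  ext x y
  simp only [adjMat, Matrix.of_apply, Matrix.submatrix_apply]
  exact if_congr (unitSum_adj B x y) rfl rfl

lemma charpoly_delVert_join {X : Type*} [Fintype X] [DecidableEq X] (B : SimpleGraph X) :
    (adjMat ℝ (delVert (sgJoin (⊤ : SimpleGraph Unit) B) (Sum.inl ()))).charpoly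
      = (adjMat ℝ B).charpoly := by
  rw [adjMat_delVert_join B]
  have h : (adjMat ℝ B).submatrix unitSumEquiv unitSumEquiv
      = reindex unitSumEquiv.symm unitSumEquiv.symm (adjMat ℝ B) := by
    rw [Matrix.reindex_apply, Equiv.symm_symm]
  rw [h, Matrix.charpoly_reindex]

def unitEmb : Fin 1 ↪ Unit := ⟨fun _ => (), fun a b _ => Subsingleton.elim a b⟩

def joinEquiv {W : Type*} [DecidableEq W] (v : W) :
    (Unit ⊕ (Fin 1 × {w : W // w ≠ v})) ≃ W where
  toFun := Sum.elim (fun _ => v) (fun p => p.2.1)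
  invFun w := if h : w = v then Sum.inl () else Sum.inr ((0 : Fin 1), ⟨w, h⟩)
  left_inv x := by
    rcases x with u | ⟨i, w⟩
    · simp
    · simp only [Sum.elim_inr]
      refine (dif_neg w.2).trans ?_
      exact congrArg Sum.inr (Prod.ext (Subsingleton.elim _ _) rfl)
  right_inv w := by by_cases h : w = v <;> simp [h]

lemma adjMat_pocket_unit {W : Type*} [Fintype W] [DecidableEq W] (H : SimpleGraph W) (v : W) :
    adjMat ℝ (pocketGraph (⊥ : SimpleGraph Unit) H v unitEmb)
      = (adjMat ℝ H).submatrix (joinEquiv v) (joinEquiv v) := by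
  ext x y
  simp only [adjMat, Matrix.of_apply, Matrix.submatrix_apply]
  rcases x with u | ⟨i, w⟩ <;> rcases y with u' | ⟨j, w'⟩
  · refine (if_neg (fun h => h)).trans (if_neg (H.irrefl)).symm
  · exact if_congr (and_iff_right (Subsingleton.elim u (unitEmb j))) rfl rfl
  · exact if_congr ((and_iff_right (Subsingleton.elim u' (unitEmb i))).trans
      (SimpleGraph.adj_comm H v w.1)) rfl rfl
  · exact if_congr (and_iff_right (Subsingleton.elim i j)) rfl rfl

lemma charpoly_pocket_unit {W : Type*} [Fintype W] [DecidableEq W] (H : SimpleGraph W)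
    (v : W) : (adjMat ℝ H).charpoly
      = (adjMat ℝ (pocketGraph (⊥ : SimpleGraph Unit) H v unitEmb)).charpoly := by
  rw [adjMat_pocket_unit H v]
  have h : (adjMat ℝ H).submatrix (joinEquiv v) (joinEquiv v)
      = reindex (joinEquiv v).symm (joinEquiv v).symm (adjMat ℝ H) := by
    rw [Matrix.reindex_apply, Equiv.symm_symm]
  rw [h, Matrix.charpoly_reindex]

def sumFin1Equiv : (Unit ⊕ Fin 1) ≃ Fin 2 where
  toFun := Sum.elim (fun _ => 0) (fun _ => 1)
  invFun i := if i = 0 then Sum.inl () else Sum.inr 0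
  left_inv x := by
    rcases x with u | i
    · simp
    · show (if (1 : Fin 2) = 0 then Sum.inl () else Sum.inr 0) = Sum.inr i
      rw [if_neg (by decide)]
      exact congrArg Sum.inr (Subsingleton.elim _ _)
  right_inv i := by fin_cases i <;> simp

lemma Mblk_unit_charpoly (m r₁ : ℕ) :
    (Mblk (⊥ : SimpleGraph Unit) unitEmb m r₁).charpoly
      = X ^ 2 - C (r₁ : ℝ) * X - C ((m : ℝ) - 1) := by
  rw [← Matrix.charpoly_reindex sumFin1Equiv]
  have h : reindex sumFin1Equiv sumFin1Equiv (Mblk (⊥ : SimpleGraph Unit) unitEmb m r₁)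
      = !![(0:ℝ), (m:ℝ) - 1; 1, (r₁:ℝ)] := by
    ext i j
    fin_cases i <;> fin_cases j <;>
      simp [Mblk, sumFin1Equiv, adjMat, Matrix.reindex_apply, Matrix.submatrix_apply]
  have hcm : charmatrix !![(0:ℝ), (m:ℝ) - 1; 1, (r₁:ℝ)]
      = !![X - C 0, -C ((m:ℝ) - 1); -C 1, X - C (r₁:ℝ)] := by
    ext i j
    fin_cases i <;> fin_cases j <;>
      simp [charmatrix_apply_eq, charmatrix_apply_ne]
  rw [h, Matrix.charpoly, hcm, Matrix.det_fin_two_of]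
  simp only [map_zero, map_sub, _root_.map_one]
  ring

lemma Mblk_unit_roots (m r₁ : ℕ) (α β : ℝ)
    (hαβ : ∀ x : ℝ, x ^ 2 - (r₁ : ℝ) * x - ((m : ℝ) - 1) = (x - α) * (x - β)) :
    (Mblk (⊥ : SimpleGraph Unit) unitEmb m r₁).charpoly = (X - C α) * (X - C β) := by
  rw [Mblk_unit_charpoly]
  apply Polynomial.funext
  intro x
  simp only [Polynomial.eval_mul, Polynomial.eval_sub, Polynomial.eval_pow, Polynomial.eval_X,
    Polynomial.eval_C]
  exact hαβ x

lemma aSpec_eq_roots {α : Type*} [Fintype α] [DecidableEq α] (G : SimpleGraph α) :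
    aSpec G = (adjMat ℝ G).charpoly.roots := by
  unfold aSpec
  congr! 1
  have h : ∀ (i j : DecidableEq α),
      @Matrix.charpoly ℝ _ α i _ (adjMat ℝ G) = @Matrix.charpoly ℝ _ α j _ (adjMat ℝ G) := by
    intro i j
    rw [Subsingleton.elim i j]
  exact h _ _

end CorAux

open CorAux Polynomial

/-- Corollary 3.4. -/
theorem adj_spec_pocketGraph_vs_cycleCompleteModel
    {V W : Type*} [Fintype V] [DecidableEq V] [Fintype W] [DecidableEq W]
    (m k p r₁ : ℕ) (hm : Fintype.card W = m) (hp : 3 ≤ p) (hr₁ : 2 ≤ r₁)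
    (hmp : m - 1 = p * (r₁ - 1))
    (F : SimpleGraph V) (H : SimpleGraph W) (v : W)
    (hdeg : ∀ w : W, w ≠ v → H.Adj v w)
    (hreg : IsReg (delVert H v) r₁)
    (f : Fin k ↪ V)
    (α β : ℝ)
    (hαβ : ∀ x : ℝ, x ^ 2 - (r₁ : ℝ) * x - ((m : ℝ) - 1) = (x - α) * (x - β)) :
    aSpec (pocketGraph F H v f)
      = k • (((aSpec H).erase α).erase β)
        + (aSpec (pocketGraph F
              (sgJoin (⊤ : SimpleGraph Unit)
                ((SimpleGraph.cycleGraph p).boxProd (⊤ : SimpleGraph (Fin (r₁ - 1)))))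
              (Sum.inl ()) f)
            - k • ((aSpec ((SimpleGraph.cycleGraph p).boxProd
                (⊤ : SimpleGraph (Fin (r₁ - 1))))).erase (r₁ : ℝ))) := by
  classical
  set B : SimpleGraph (Fin p × Fin (r₁ - 1)) :=
    (SimpleGraph.cycleGraph p).boxProd (⊤ : SimpleGraph (Fin (r₁ - 1))) with hB
  set Hs : SimpleGraph (Unit ⊕ (Fin p × Fin (r₁ - 1))) :=
    sgJoin (⊤ : SimpleGraph Unit) B with hHs
  have hm4 : 4 ≤ m := by
    have h3 : p ≤ p * (r₁ - 1) := Nat.le_mul_of_pos_right p (by omega)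
    omega
  have hcardW' : Fintype.card {w : W // w ≠ v} = m - 1 := by
    have h2 := Fintype.card_subtype_compl (fun w : W => w = v)
    rw [Fintype.card_subtype_eq v, hm] at h2
    exact h2
  have hne : Nonempty {w : W // w ≠ v} := by
    rw [← Fintype.card_pos_iff, hcardW']
    omega
  obtain ⟨w₀⟩ := hne
  have hBreg : IsReg B r₁ := box_reg p r₁ hp hr₁
  have hcardWs : Fintype.card (Unit ⊕ (Fin p × Fin (r₁ - 1))) = m := by
    rw [Fintype.card_sum, Fintype.card_unit, Fintype.card_prod, Fintype.card_fin,
      Fintype.card_fin, ← hmp]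
    omega
  have hdegs : ∀ w : Unit ⊕ (Fin p × Fin (r₁ - 1)), w ≠ Sum.inl () →
      Hs.Adj (Sum.inl ()) w := by
    rintro (u | b) hw
    · cases u; exact absurd rfl hw
    · trivial
  have hregs : IsReg (delVert Hs (Sum.inl ())) r₁ := delVert_join_reg B r₁ hBreg
  set w₀s : {w : Unit ⊕ (Fin p × Fin (r₁ - 1)) // w ≠ Sum.inl ()} :=
    ⟨Sum.inr (⟨0, by omega⟩, ⟨0, by omega⟩), Sum.inr_ne_inl⟩ with hw₀s
  have hG := pocket_charpoly F H v f m r₁ hm hdeg hreg w₀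
  have hH := pocket_charpoly (⊥ : SimpleGraph Unit) H v unitEmb m r₁ hm hdeg hreg w₀
  have hGs := pocket_charpoly F Hs (Sum.inl ()) f m r₁ hcardWs hdegs hregs w₀s
  have hA1s := charpoly_rowsum (adjMat ℝ (delVert Hs (Sum.inl ())))
    (r₁ : ℝ) w₀s (fun x => rowsum_of_reg _ r₁ hregs x)
  have hMne : (Mblk F f m r₁).charpoly ≠ 0 := (Matrix.charpoly_monic _).ne_zero
  have hNne : (Nm (adjMat ℝ (delVert H v)) w₀).charpoly ≠ 0 := (Matrix.charpoly_monic _).ne_zero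
  have hNsne : (Nm (adjMat ℝ (delVert Hs (Sum.inl ()))) w₀s).charpoly ≠ 0 :=
    (Matrix.charpoly_monic _).ne_zero
  have hs1 : aSpec (pocketGraph F H v f)
      = (Mblk F f m r₁).charpoly.roots
        + k • (Nm (adjMat ℝ (delVert H v)) w₀).charpoly.roots := by
    rw [aSpec_eq_roots, hG, Polynomial.roots_mul (mul_ne_zero hMne (pow_ne_zero _ hNne)),
      Polynomial.roots_pow]
  have hs2 : aSpec H = α ::ₘ β ::ₘ (Nm (adjMat ℝ (delVert H v)) w₀).charpoly.roots := by
    rw [aSpec_eq_roots, charpoly_pocket_unit H v, hH, pow_one, Mblk_unit_roots m r₁ α β hαβ,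
      Polynomial.roots_mul (mul_ne_zero
        (mul_ne_zero (Polynomial.X_sub_C_ne_zero α) (Polynomial.X_sub_C_ne_zero β)) hNne),
      Polynomial.roots_mul (mul_ne_zero (Polynomial.X_sub_C_ne_zero α)
        (Polynomial.X_sub_C_ne_zero β)),
      Polynomial.roots_X_sub_C, Polynomial.roots_X_sub_C, add_assoc,
      Multiset.singleton_add, Multiset.singleton_add]
  have hs3 : aSpec (pocketGraph F Hs (Sum.inl ()) f)
      = (Mblk F f m r₁).charpoly.roots
        + k • (Nm (adjMat ℝ (delVert Hs (Sum.inl ()))) w₀s).charpoly.roots := by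
    rw [aSpec_eq_roots, hGs, Polynomial.roots_mul (mul_ne_zero hMne (pow_ne_zero _ hNsne)),
      Polynomial.roots_pow]
  have hs4 : aSpec B
      = (r₁ : ℝ) ::ₘ (Nm (adjMat ℝ (delVert Hs (Sum.inl ()))) w₀s).charpoly.roots := by
    rw [aSpec_eq_roots, ← charpoly_delVert_join B, hA1s,
      Polynomial.roots_mul (mul_ne_zero (Polynomial.X_sub_C_ne_zero _) hNsne),
      Polynomial.roots_X_sub_C, Multiset.singleton_add]
  rw [hs1, hs2, hs3, hs4, Multiset.erase_cons_head, Multiset.erase_cons_head,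
    Multiset.erase_cons_head, add_tsub_cancel_right]
  exact add_comm _ _
end

section
/- Let G = G[F,E_k,H_{uv}] be the graph with k edge-pockets, where |E_k| = k and the subgraph 𝓔_k of F induced by E_k is r-regular on p = 2k/r vertices. Then for every complex number x such that x − 2 is not an eigenvalue of Q(H_2), the Q-characteristic polynomial of G satisfies f_{Q(G)}(x) = (f_{Q(H_2)}(x−2))^k · det(x I_n − M), where M = Q(F) + r(m−2)·diag(I_p, 0) + Γ_{Q(H_2)}(x−2)·diag(Q(𝓔_k), 0), and the block structure is taken with respect to an ordering of V(F) listing the p vertices of 𝓔_k first. -/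
open Matrix BigOperators
open scoped Classical

lemma sym2_map_g_iff {α β : Type*} {g : α → β} (hg : Function.Injective g) {s t x y : α} :
    s(g s, g t) = s(g x, g y) ↔ s(s, t) = s(x, y) := by
  simp [Sym2.eq_iff, hg.eq_iff]

lemma pair_filter_eq {p k : ℕ} (A B : Fin k → Fin p)
    (hinj : Function.Injective fun i => s(A i, B i)) (E : SimpleGraph (Fin p))
    (hE : ∀ s t, E.Adj s t ↔ ∃ i, s(s, t) = s(A i, B i))
    (s t : Fin p) (hst : s ≠ t) :
    (Finset.univ.filter fun i => (s = A i ∨ s = B i) ∧ (t = A i ∨ t = B i)).card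
      = if E.Adj s t then 1 else 0 := by
  have hcond : ∀ i, ((s = A i ∨ s = B i) ∧ (t = A i ∨ t = B i)) ↔ s(s, t) = s(A i, B i) := by
    intro i
    rw [Sym2.eq_iff]
    constructor
    · rintro ⟨hs | hs, ht | ht⟩
      · exact absurd (hs.trans ht.symm) hst
      · exact Or.inl ⟨hs, ht⟩
      · exact Or.inr ⟨hs, ht⟩
      · exact absurd (hs.trans ht.symm) hst
    · rintro (⟨hs, ht⟩ | ⟨hs, ht⟩)
      · exact ⟨Or.inl hs, Or.inr ht⟩
      · exact ⟨Or.inr hs, Or.inl ht⟩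
  by_cases h : E.Adj s t
  · rw [if_pos h]
    obtain ⟨i, hi⟩ := (hE s t).mp h
    have : (Finset.univ.filter fun i => (s = A i ∨ s = B i) ∧ (t = A i ∨ t = B i)) = {i} := by
      ext j
      simp only [Finset.mem_filter, Finset.mem_univ, true_and, Finset.mem_singleton, hcond]
      constructor
      · intro hj; exact hinj (hj.symm.trans hi)
      · rintro rfl; exact hi
    rw [this, Finset.card_singleton]
  · rw [if_neg h, Finset.card_eq_zero, Finset.filter_eq_empty_iff]
    intro j _
    rw [hcond]
    intro hj
    exact h ((hE s t).mpr ⟨j, hj⟩)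

lemma deg_filter_eq {p k : ℕ} (A B : Fin k → Fin p) (hne : ∀ i, A i ≠ B i)
    (hinj : Function.Injective fun i => s(A i, B i)) (E : SimpleGraph (Fin p))
    (hE : ∀ s t, E.Adj s t ↔ ∃ i, s(s, t) = s(A i, B i)) (t : Fin p) :
    (Finset.univ.filter fun i => t = A i ∨ t = B i).card = gdeg E t := by
  rw [gdeg]
  refine Finset.card_bij (fun i _ => if t = A i then B i else A i) ?_ ?_ ?_
  · intro i hi
    simp only [Finset.mem_filter, Finset.mem_univ, true_and] at hi ⊢
    split_ifs with h
    · exact (hE t (B i)).mpr ⟨i, by rw [Sym2.eq_iff]; exact Or.inl ⟨h, rfl⟩⟩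
    · have ht : t = B i := hi.resolve_left h
      exact (hE t (A i)).mpr ⟨i, by rw [Sym2.eq_iff]; exact Or.inr ⟨ht, rfl⟩⟩
  · intro i hi j hj hij
    simp only [Finset.mem_filter, Finset.mem_univ, true_and] at hi hj
    have key : ∀ l, (t = A l ∨ t = B l) → s(A l, B l) = s(t, if t = A l then B l else A l) := by
      intro l hl
      split_ifs with h
      · rw [← h]
      · have h2 : t = B l := hl.resolve_left h
        rw [← h2, Sym2.eq_iff]
        exact Or.inr ⟨rfl, rfl⟩
    exact hinj (((key i hi).trans (by rw [show (if t = A i then B i else A i) = (if t = A j then B j else A j) from hij])).trans (key j hj).symm)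
  · intro t' ht'
    simp only [Finset.mem_filter, Finset.mem_univ, true_and] at ht'
    obtain ⟨i, hi⟩ := (hE t t').mp ht'
    rw [Sym2.eq_iff] at hi
    rcases hi with ⟨h1, h2⟩ | ⟨h1, h2⟩
    · refine ⟨i, by simp [Finset.mem_filter, Or.inl h1], ?_⟩
      show (if t = A i then B i else A i) = t'
      rw [if_pos h1, ← h2]
    · refine ⟨i, by simp [Finset.mem_filter, Or.inr h1], ?_⟩
      show (if t = A i then B i else A i) = t'
      rw [if_neg ?_, ← h2]
      intro hA
      exact hne i (hA.symm.trans h1)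

/-- Proposition 4.1. -/
theorem signlessLap_charpoly_edgePocketGraph
    {V W : Type*} [Fintype V] [DecidableEq V] [Fintype W] [DecidableEq W]
    (n m k p r : ℕ) (hn : Fintype.card V = n) (hn2 : 2 ≤ n)
    (hm : Fintype.card W = m) (hm3 : 3 ≤ m)
    (F : SimpleGraph V) (H : SimpleGraph W) (u v : W) (huv : u ≠ v)
    (hdegu : ∀ w : W, w ≠ u → H.Adj u w) (hdegv : ∀ w : W, w ≠ v → H.Adj v w)
    (a b : Fin k → V) (hab : ∀ i, F.Adj (a i) (b i))
    (hinj : Function.Injective fun i => s(a i, b i))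
    (g : Fin p ↪ V) (E : SimpleGraph (Fin p))
    (hE : ∀ s t : Fin p, E.Adj s t ↔ ∃ i, s(g s, g t) = s(a i, b i))
    (hcover : ∀ i, a i ∈ Set.range g ∧ b i ∈ Set.range g)
    (hreg : IsReg E r) (hpk : r * p = 2 * k)
    (x : ℂ)
    (hx : ((x - 2) • (1 : Matrix {w : W // w ≠ u ∧ w ≠ v} {w : W // w ≠ u ∧ w ≠ v} ℂ)
            - qMat ℂ (delVert2 H u v)).det ≠ 0) :
    (x • (1 : Matrix (V ⊕ (Fin k × {w : W // w ≠ u ∧ w ≠ v}))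
            (V ⊕ (Fin k × {w : W // w ≠ u ∧ w ≠ v})) ℂ)
        - qMat ℂ (edgePocketGraph F H u v a b)).det
      = (((x - 2) • (1 : Matrix {w : W // w ≠ u ∧ w ≠ v} {w : W // w ≠ u ∧ w ≠ v} ℂ)
            - qMat ℂ (delVert2 H u v)).det) ^ k
        * (x • (1 : Matrix V V ℂ)
            - (qMat ℂ F
                + ((r : ℂ) * ((m : ℂ) - 2))
                    • embedMatrix (g : Fin p → V) (1 : Matrix (Fin p) (Fin p) ℂ)
                + coronal (qMat ℂ (delVert2 H u v)) (x - 2)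
                    • embedMatrix (g : Fin p → V) (qMat ℂ E))).det := by
  classical
  choose A' hA' using fun i => (hcover i).1
  choose B' hB' using fun i => (hcover i).2
  have hgi : Function.Injective g := g.injective
  have hne' : ∀ i, A' i ≠ B' i := fun i h => (hab i).ne (by rw [← hA', ← hB', h])
  have hE' : ∀ s t : Fin p, E.Adj s t ↔ ∃ i, s(s, t) = s(A' i, B' i) := by
    intro s t
    rw [hE]
    refine exists_congr fun i => ?_
    rw [← hA' i, ← hB' i, sym2_map_g_iff hgi]
  have hinj' : Function.Injective fun i => s(A' i, B' i) := by
    intro i j h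
    apply hinj
    have h2 := congrArg (Sym2.map g) h
    simpa only [Sym2.map_pair_eq, hA', hB'] using h2
  have hm2 : 2 ≤ m := by omega
  have hScard : Fintype.card {w : W // w ≠ u ∧ w ≠ v} = m - 2 := by
    have h2 : Fintype.card {w : W // w ≠ u ∧ w ≠ v}
        = Fintype.card {w : W // ¬(w = u ∨ w = v)} :=
      Fintype.card_congr (Equiv.subtypeEquivRight fun w => by tauto)
    have h1 : Fintype.card {w : W // w = u ∨ w = v} = 2 := by
      rw [Fintype.card_subtype]
      have h3 : (Finset.univ.filter fun w : W => w = u ∨ w = v) = {u, v} := by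
        ext w; simp
      rw [h3, Finset.card_insert_of_notMem (by simp [huv]), Finset.card_singleton]
    rw [h2, Fintype.card_subtype_compl, h1, hm]
  have hadj_u : ∀ w : {w : W // w ≠ u ∧ w ≠ v}, H.Adj u w.1 := fun w => hdegu w.1 w.2.1
  have hadj_v : ∀ w : {w : W // w ≠ u ∧ w ≠ v}, H.Adj v w.1 := fun w => hdegv w.1 w.2.2
  have hnadjH : ∀ w : {w : W // w ≠ u ∧ w ≠ v}, ¬ H.Adj w.1 w.1 := fun w => H.irrefl
  have hcnt_g : ∀ t : Fin p,
      (Finset.univ.filter fun i => g t = a i ∨ g t = b i).card = r := by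
    intro t
    have he : (Finset.univ.filter fun i => g t = a i ∨ g t = b i)
        = (Finset.univ.filter fun i => t = A' i ∨ t = B' i) := by
      ext i
      simp only [Finset.mem_filter, Finset.mem_univ, true_and]
      rw [← hA' i, ← hB' i, hgi.eq_iff, hgi.eq_iff]
    rw [he, deg_filter_eq A' B' hne' hinj' E hE' t, hreg t]
  have hcnt_not : ∀ s : V, s ∉ Set.range g →
      (Finset.univ.filter fun i => s = a i ∨ s = b i) = ∅ := by
    intro s hs
    rw [Finset.filter_eq_empty_iff]
    rintro i - (h | h)
    · exact hs ⟨A' i, by rw [hA', h]⟩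
    · exact hs ⟨B' i, by rw [hB', h]⟩
  -- the matrices
  set N : Matrix {w : W // w ≠ u ∧ w ≠ v} {w : W // w ≠ u ∧ w ≠ v} ℂ :=
    (x - 2) • (1 : Matrix {w : W // w ≠ u ∧ w ≠ v} {w : W // w ≠ u ∧ w ≠ v} ℂ)
      - qMat ℂ (delVert2 H u v) with hNdef
  have hNunit : IsUnit N.det := isUnit_iff_ne_zero.mpr (by rw [hNdef]; exact hx)
  have hNmul : N * N⁻¹ = 1 := Matrix.mul_nonsing_inv N hNunit
  set e : (Fin k × {w : W // w ≠ u ∧ w ≠ v}) ≃ ({w : W // w ≠ u ∧ w ≠ v} × Fin k) :=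
    Equiv.prodComm (Fin k) {w : W // w ≠ u ∧ w ≠ v} with hedef
  set D₁ := (Matrix.blockDiagonal fun _ : Fin k => N).submatrix e e with hD₁def
  set Dinv := (Matrix.blockDiagonal fun _ : Fin k => N⁻¹).submatrix e e with hDinvdef
  have hDmul : D₁ * Dinv = 1 := by
    rw [hD₁def, hDinvdef, Matrix.submatrix_mul_equiv, ← Matrix.blockDiagonal_mul]
    simp only [hNmul]
    rw [show (Matrix.blockDiagonal fun _ : Fin k => (1 : Matrix {w : W // w ≠ u ∧ w ≠ v} {w : W // w ≠ u ∧ w ≠ v} ℂ)) = 1 from Matrix.blockDiagonal_one]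
    exact Matrix.submatrix_one_equiv e
  have hDdet : D₁.det = N.det ^ k := by
    rw [hD₁def, Matrix.det_submatrix_equiv_self, Matrix.det_blockDiagonal]
    simp
  have hD₁app : ∀ (i j : Fin k) (w w' : {w : W // w ≠ u ∧ w ≠ v}),
      D₁ (i, w) (j, w') = if i = j then N w w' else 0 := by
    intro i j w w'
    rw [hD₁def]
    simp [hedef, Matrix.submatrix_apply, Matrix.blockDiagonal_apply]
  have hDinvapp : ∀ (i j : Fin k) (w w' : {w : W // w ≠ u ∧ w ≠ v}),
      Dinv (i, w) (j, w') = if i = j then N⁻¹ w w' else 0 := by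
    intro i j w w'
    rw [hDinvdef]
    simp [hedef, Matrix.submatrix_apply, Matrix.blockDiagonal_apply]
  set B₁ : Matrix V (Fin k × {w : W // w ≠ u ∧ w ≠ v}) ℂ :=
    Matrix.of (fun s pq => -(if s = a pq.1 ∨ s = b pq.1 then (1 : ℂ) else 0)) with hB₁def
  set C₁ : Matrix (Fin k × {w : W // w ≠ u ∧ w ≠ v}) V ℂ :=
    Matrix.of (fun pq t => -(if t = a pq.1 ∨ t = b pq.1 then (1 : ℂ) else 0)) with hC₁def
  set A₁ : Matrix V V ℂ :=
    x • (1 : Matrix V V ℂ) - qMat ℂ F - Matrix.diagonal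
      (fun s => (((Finset.univ.filter fun i => s = a i ∨ s = b i).card * (m - 2) : ℕ) : ℂ))
    with hA₁def
  -- adjacency descriptions
  have hAdj_ll : ∀ s t : V,
      (edgePocketGraph F H u v a b).Adj (Sum.inl s) (Sum.inl t) ↔ F.Adj s t :=
    fun s t => Iff.rfl
  have hAdj_lr : ∀ (s : V) (i : Fin k) (w : {w : W // w ≠ u ∧ w ≠ v}),
      (edgePocketGraph F H u v a b).Adj (Sum.inl s) (Sum.inr (i, w))
        ↔ (s = a i ∨ s = b i) := by
    intro s i w
    constructor
    · rintro (⟨h, -⟩ | ⟨h, -⟩)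
      · exact Or.inl h
      · exact Or.inr h
    · rintro (h | h)
      · exact Or.inl ⟨h, hadj_u w⟩
      · exact Or.inr ⟨h, hadj_v w⟩
  have hAdj_rl : ∀ (s : V) (i : Fin k) (w : {w : W // w ≠ u ∧ w ≠ v}),
      (edgePocketGraph F H u v a b).Adj (Sum.inr (i, w)) (Sum.inl s)
        ↔ (s = a i ∨ s = b i) := by
    intro s i w
    constructor
    · rintro (⟨h, -⟩ | ⟨h, -⟩)
      · exact Or.inl h
      · exact Or.inr h
    · rintro (h | h)
      · exact Or.inl ⟨h, hadj_u w⟩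
      · exact Or.inr ⟨h, hadj_v w⟩
  have hAdj_rr : ∀ (i j : Fin k) (w w' : {w : W // w ≠ u ∧ w ≠ v}),
      (edgePocketGraph F H u v a b).Adj (Sum.inr (i, w)) (Sum.inr (j, w'))
        ↔ (i = j ∧ H.Adj w.1 w'.1) := fun _ _ _ _ => Iff.rfl
  have hH2adj : ∀ w w' : {w : W // w ≠ u ∧ w ≠ v},
      (delVert2 H u v).Adj w w' ↔ H.Adj w.1 w'.1 := fun _ _ => Iff.rfl
  -- degrees in the pocket graph
  have hdeg_inl : ∀ s : V, gdeg (edgePocketGraph F H u v a b) (Sum.inl s)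
      = gdeg F s + (Finset.univ.filter fun i => s = a i ∨ s = b i).card * (m - 2) := by
    intro s
    rw [gdeg, Finset.card_filter, Fintype.sum_sum_type]
    congr 1
    · rw [gdeg, Finset.card_filter]
      exact Finset.sum_congr rfl fun t _ => by simp only [hAdj_ll]
    · rw [Fintype.sum_prod_type]
      have h1 : ∀ i : Fin k,
          (∑ w : {w : W // w ≠ u ∧ w ≠ v},
            if (edgePocketGraph F H u v a b).Adj (Sum.inl s) (Sum.inr (i, w)) then 1 else 0)
          = (if s = a i ∨ s = b i then 1 else 0) * (m - 2) := by
        intro i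
        simp only [hAdj_lr]
        split_ifs
        · rw [Finset.sum_const, Finset.card_univ, hScard, smul_eq_mul, mul_one, one_mul]
        · simp
      simp only [h1]
      rw [← Finset.sum_mul, ← Finset.card_filter]
  have hdeg_inr : ∀ (i : Fin k) (w : {w : W // w ≠ u ∧ w ≠ v}),
      gdeg (edgePocketGraph F H u v a b) (Sum.inr (i, w))
        = 2 + gdeg (delVert2 H u v) w := by
    intro i w
    rw [gdeg, Finset.card_filter, Fintype.sum_sum_type]
    congr 1
    · simp only [hAdj_rl]
      rw [← Finset.card_filter]
      have h3 : (Finset.univ.filter fun t : V => t = a i ∨ t = b i) = {a i, b i} := by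
        ext t; simp
      rw [h3, Finset.card_insert_of_notMem (by simp [(hab i).ne]), Finset.card_singleton]
    · rw [Fintype.sum_prod_type]
      have h5 : ∀ j : Fin k,
          (∑ w' : {w : W // w ≠ u ∧ w ≠ v},
            if (edgePocketGraph F H u v a b).Adj (Sum.inr (i, w)) (Sum.inr (j, w')) then 1 else 0)
          = if i = j then gdeg (delVert2 H u v) w else 0 := by
        intro j
        simp only [hAdj_rr]
        by_cases hij : i = j
        · subst hij
          rw [if_pos rfl, gdeg, Finset.card_filter]
          exact Finset.sum_congr rfl fun w' _ => by simp only [hH2adj, true_and]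
        · rw [if_neg hij]
          exact Finset.sum_eq_zero fun w' _ => if_neg (fun hc => hij hc.1)
      simp only [h5]
      rw [Finset.sum_ite_eq]
      simp
  -- the block decomposition
  have hblock : x • (1 : Matrix (V ⊕ (Fin k × {w : W // w ≠ u ∧ w ≠ v}))
        (V ⊕ (Fin k × {w : W // w ≠ u ∧ w ≠ v})) ℂ)
      - qMat ℂ (edgePocketGraph F H u v a b) = Matrix.fromBlocks A₁ B₁ C₁ D₁ := by
    ext st rt
    rcases st with s | ⟨i, w⟩ <;> rcases rt with t | ⟨j, w'⟩
    · rw [Matrix.fromBlocks_apply₁₁, hA₁def]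
      simp only [Matrix.sub_apply, Matrix.smul_apply, Matrix.one_apply, qMat, Matrix.add_apply,
        Matrix.diagonal_apply, adjMat, Matrix.of_apply, Sum.inl.injEq, hAdj_ll, hdeg_inl,
        smul_eq_mul]
      by_cases hst : s = t
      · subst hst
        simp only [if_pos rfl]
        push_cast
        ring
      · simp only [if_neg hst]
        ring
    · rw [Matrix.fromBlocks_apply₁₂, hB₁def]
      simp only [Matrix.sub_apply, Matrix.smul_apply, Matrix.one_apply, qMat, Matrix.add_apply,
        Matrix.diagonal_apply, adjMat, Matrix.of_apply, smul_eq_mul, hAdj_lr]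
      simp
    · rw [Matrix.fromBlocks_apply₂₁, hC₁def]
      simp only [Matrix.sub_apply, Matrix.smul_apply, Matrix.one_apply, qMat, Matrix.add_apply,
        Matrix.diagonal_apply, adjMat, Matrix.of_apply, smul_eq_mul, hAdj_rl]
      simp
    · rw [Matrix.fromBlocks_apply₂₂, hD₁app i j w w']
      have hNapp : N w w' = (x - 2) * (if w = w' then 1 else 0)
          - ((if w = w' then ((gdeg (delVert2 H u v) w : ℕ) : ℂ) else 0)
            + (if H.Adj w.1 w'.1 then 1 else 0)) := by
        rw [hNdef]
        simp only [Matrix.sub_apply, Matrix.smul_apply, Matrix.one_apply, qMat, Matrix.add_apply,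
          Matrix.diagonal_apply, adjMat, Matrix.of_apply, smul_eq_mul, hH2adj]
        split_ifs <;> rfl
      simp only [Matrix.sub_apply, Matrix.smul_apply, Matrix.one_apply, qMat, Matrix.add_apply,
        Matrix.diagonal_apply, adjMat, Matrix.of_apply, smul_eq_mul, hAdj_rr, hdeg_inr,
        Sum.inr.injEq, Prod.mk.injEq, hNapp]
      by_cases hij : i = j
      · subst hij
        by_cases hww : w = w'
        · subst hww
          simp only [if_pos rfl, and_self, if_pos (And.intro rfl rfl), true_and,
            if_neg (hnadjH w)]
          push_cast
          ring
        · have h6 : ¬ (i = i ∧ w = w') := fun h => hww h.2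
          simp only [if_pos rfl, if_neg hww, if_neg h6, true_and]
          push_cast
          ring
      · have h7 : ¬ (i = j ∧ w = w') := fun h => hij h.1
        have h8 : ¬ (i = j ∧ H.Adj w.1 w'.1) := fun h => hij h.1
        simp only [if_neg hij, if_neg h7, if_neg h8]
        ring
  -- embed lemmas
  have hembed_g : ∀ (M : Matrix (Fin p) (Fin p) ℂ) (ps pt : Fin p),
      embedMatrix (g : Fin p → V) M (g ps) (g pt) = M ps pt := by
    intro M ps pt
    simp only [embedMatrix, Matrix.of_apply]
    rw [Finset.sum_eq_single ps]
    · rw [Finset.sum_eq_single pt]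
      · rw [if_pos ⟨rfl, rfl⟩]
      · intro py _ hpy
        rw [if_neg]
        rintro ⟨-, h⟩
        exact hpy (hgi h.symm)
      · intro h; exact absurd (Finset.mem_univ pt) h
    · intro px _ hpx
      apply Finset.sum_eq_zero
      intro py _
      rw [if_neg]
      rintro ⟨h, -⟩
      exact hpx (hgi h.symm)
    · intro h; exact absurd (Finset.mem_univ ps) h
  have hembed_zl : ∀ (M : Matrix (Fin p) (Fin p) ℂ) (s t : V), s ∉ Set.range g →
      embedMatrix (g : Fin p → V) M s t = 0 := by
    intro M s t hs
    simp only [embedMatrix, Matrix.of_apply]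
    apply Finset.sum_eq_zero; intro px _
    apply Finset.sum_eq_zero; intro py _
    rw [if_neg]; rintro ⟨h, -⟩; exact hs ⟨px, h.symm⟩
  have hembed_zr : ∀ (M : Matrix (Fin p) (Fin p) ℂ) (s t : V), t ∉ Set.range g →
      embedMatrix (g : Fin p → V) M s t = 0 := by
    intro M s t ht
    simp only [embedMatrix, Matrix.of_apply]
    apply Finset.sum_eq_zero; intro px _
    apply Finset.sum_eq_zero; intro py _
    rw [if_neg]; rintro ⟨-, h⟩; exact ht ⟨py, h.symm⟩
  -- claim 1 : the diagonal correction is r(m-2) · embed g 1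
  have claim1 : Matrix.diagonal
      (fun s : V => (((Finset.univ.filter fun i => s = a i ∨ s = b i).card * (m - 2) : ℕ) : ℂ))
      = ((r : ℂ) * ((m : ℂ) - 2)) • embedMatrix (g : Fin p → V) (1 : Matrix (Fin p) (Fin p) ℂ) := by
    ext s t
    rw [Matrix.smul_apply]
    by_cases hst : s = t
    · subst hst
      rw [Matrix.diagonal_apply_eq]
      by_cases hs : s ∈ Set.range g
      · obtain ⟨ps, rfl⟩ := hs
        rw [hembed_g, Matrix.one_apply_eq, hcnt_g ps, smul_eq_mul, mul_one]
        push_cast [Nat.cast_sub hm2]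
        ring
      · rw [hembed_zl _ _ _ hs, hcnt_not s hs]
        simp
    · rw [Matrix.diagonal_apply_ne _ hst]
      by_cases hs : s ∈ Set.range g
      · by_cases ht : t ∈ Set.range g
        · obtain ⟨ps, rfl⟩ := hs
          obtain ⟨pt, rfl⟩ := ht
          rw [hembed_g, Matrix.one_apply_ne (fun h => hst (by rw [h]))]
          simp
        · rw [hembed_zr _ _ _ ht]; simp
      · rw [hembed_zl _ _ _ hs]; simp
  -- the coronal
  have hGamma : coronal (qMat ℂ (delVert2 H u v)) (x - 2)
      = ∑ w : {w : W // w ≠ u ∧ w ≠ v}, ∑ w' : {w : W // w ≠ u ∧ w ≠ v}, N⁻¹ w w' := by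
    unfold coronal
    rw [← hNdef]
  -- claim 2 : the Schur-product term
  have hqE : ∀ ps pt : Fin p, (qMat ℂ E) ps pt
      = (if ps = pt then ((r : ℕ) : ℂ) else 0) + (if E.Adj ps pt then 1 else 0) := by
    intro ps pt
    simp [qMat, adjMat, Matrix.diagonal_apply, hreg ps]
  have hcnt2 : ∀ s t : V,
      (((Finset.univ.filter fun i => (s = a i ∨ s = b i) ∧ (t = a i ∨ t = b i)).card : ℕ) : ℂ)
        = embedMatrix (g : Fin p → V) (qMat ℂ E) s t := by
    intro s t
    by_cases hs : s ∈ Set.range g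
    · obtain ⟨ps, rfl⟩ := hs
      by_cases ht : t ∈ Set.range g
      · obtain ⟨pt, rfl⟩ := ht
        rw [hembed_g, hqE]
        by_cases hpp : ps = pt
        · subst hpp
          rw [if_pos rfl, if_neg (E.irrefl), add_zero]
          have hfe : (Finset.univ.filter fun i =>
                (g ps = a i ∨ g ps = b i) ∧ (g ps = a i ∨ g ps = b i))
              = (Finset.univ.filter fun i => g ps = a i ∨ g ps = b i) := by
            ext i; simp [and_self]
          rw [hfe, hcnt_g ps]
        · have hfe : (Finset.univ.filter fun i =>
                (g ps = a i ∨ g ps = b i) ∧ (g pt = a i ∨ g pt = b i))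
              = (Finset.univ.filter fun i => (ps = A' i ∨ ps = B' i) ∧ (pt = A' i ∨ pt = B' i)) := by
            ext i
            simp only [Finset.mem_filter, Finset.mem_univ, true_and]
            rw [← hA' i, ← hB' i, hgi.eq_iff, hgi.eq_iff, hgi.eq_iff, hgi.eq_iff]
          rw [hfe, pair_filter_eq A' B' hinj' E hE' ps pt hpp, if_neg hpp, zero_add]
          split_ifs <;> simp
      · rw [hembed_zr _ _ _ ht]
        have hfe : (Finset.univ.filter fun i =>
            (g ps = a i ∨ g ps = b i) ∧ (t = a i ∨ t = b i)) = ∅ := by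
          rw [Finset.filter_eq_empty_iff]
          rintro i - ⟨-, (h | h)⟩
          · exact ht ⟨A' i, by rw [hA', h]⟩
          · exact ht ⟨B' i, by rw [hB', h]⟩
        rw [hfe]; simp
    · rw [hembed_zl _ _ _ hs]
      have hfe : (Finset.univ.filter fun i =>
          (s = a i ∨ s = b i) ∧ (t = a i ∨ t = b i)) = ∅ := by
        rw [Finset.filter_eq_empty_iff]
        rintro i - ⟨(h | h), -⟩
        · exact hs ⟨A' i, by rw [hA', h]⟩
        · exact hs ⟨B' i, by rw [hB', h]⟩
      rw [hfe]; simp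
  have claim2 : B₁ * Dinv * C₁
      = coronal (qMat ℂ (delVert2 H u v)) (x - 2)
          • embedMatrix (g : Fin p → V) (qMat ℂ E) := by
    ext s t
    rw [Matrix.smul_apply, ← hcnt2 s t, hGamma]
    rw [Matrix.mul_apply, Fintype.sum_prod_type]
    have hBD : ∀ (j : Fin k) (w' : {w : W // w ≠ u ∧ w ≠ v}), (B₁ * Dinv) s (j, w')
        = -(if s = a j ∨ s = b j then (1 : ℂ) else 0)
            * (∑ w : {w : W // w ≠ u ∧ w ≠ v}, N⁻¹ w w') := by
      intro j w'
      rw [Matrix.mul_apply, Fintype.sum_prod_type]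
      have h9 : ∀ i : Fin k,
          (∑ w : {w : W // w ≠ u ∧ w ≠ v}, B₁ s (i, w) * Dinv (i, w) (j, w'))
          = if i = j then
              -(if s = a i ∨ s = b i then (1 : ℂ) else 0)
                * (∑ w : {w : W // w ≠ u ∧ w ≠ v}, N⁻¹ w w')
            else 0 := by
        intro i
        by_cases hij : i = j
        · subst hij
          rw [if_pos rfl, Finset.mul_sum]
          refine Finset.sum_congr rfl fun w _ => ?_
          rw [hB₁def, hDinvapp, if_pos rfl]
          simp
        · rw [if_neg hij]
          apply Finset.sum_eq_zero
          intro w _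
          rw [hDinvapp, if_neg hij, mul_zero]
      simp only [h9]
      rw [Finset.sum_ite_eq']
      simp
    simp only [hBD, hC₁def, Matrix.of_apply]
    have h10 : ∀ j : Fin k,
        (∑ w' : {w : W // w ≠ u ∧ w ≠ v},
          (-(if s = a j ∨ s = b j then (1 : ℂ) else 0)
              * (∑ w : {w : W // w ≠ u ∧ w ≠ v}, N⁻¹ w w'))
            * -(if t = a j ∨ t = b j then (1 : ℂ) else 0))
        = (if (s = a j ∨ s = b j) ∧ (t = a j ∨ t = b j) then (1 : ℂ) else 0)
            * (∑ w : {w : W // w ≠ u ∧ w ≠ v}, ∑ w' : {w : W // w ≠ u ∧ w ≠ v}, N⁻¹ w w') := by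
      intro j
      rw [← Finset.sum_mul, ← Finset.mul_sum]
      have hsc : (∑ w' : {w : W // w ≠ u ∧ w ≠ v}, ∑ w : {w : W // w ≠ u ∧ w ≠ v}, N⁻¹ w w')
          = ∑ w : {w : W // w ≠ u ∧ w ≠ v}, ∑ w' : {w : W // w ≠ u ∧ w ≠ v}, N⁻¹ w w' :=
        Finset.sum_comm
      rw [hsc]
      by_cases hP : s = a j ∨ s = b j <;> by_cases hQ : t = a j ∨ t = b j <;>
        simp [hP, hQ]
    simp only [h10]
    rw [← Finset.sum_mul]
    have hcc : (((Finset.univ.filter fun i =>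
          (s = a i ∨ s = b i) ∧ (t = a i ∨ t = b i)).card : ℕ) : ℂ)
        = ∑ j : Fin k, if (s = a j ∨ s = b j) ∧ (t = a j ∨ t = b j) then (1 : ℂ) else 0 := by
      rw [Finset.card_filter, Nat.cast_sum]
      exact Finset.sum_congr rfl fun j _ => by split_ifs <;> simp
    rw [← hcc, smul_eq_mul, mul_comm]
  -- assemble
  have hmain : A₁ - B₁ * Dinv * C₁
      = x • (1 : Matrix V V ℂ)
        - (qMat ℂ F
            + ((r : ℂ) * ((m : ℂ) - 2))
                • embedMatrix (g : Fin p → V) (1 : Matrix (Fin p) (Fin p) ℂ)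
            + coronal (qMat ℂ (delVert2 H u v)) (x - 2)
                • embedMatrix (g : Fin p → V) (qMat ℂ E)) := by
    rw [hA₁def, claim1, claim2]
    abel
  haveI : Invertible D₁ := invertibleOfRightInverse _ _ hDmul
  rw [hblock, Matrix.det_fromBlocks₂₂, invOf_eq_right_inv hDmul, hDdet, hmain]
end
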